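/- arXiv:2512.07008 — 6 statements merged into one kernel-verified Lean document; each statement's English description precedes it below -/
import Mathlib

section
/- For n ≥ 1, the total number of runs of weak ascents over all Catalan words of length n equals C(2n-2, n-1). -/
open List Finset

def IsCatalanWord (w : List ℕ) : Prop :=
  (∀ x ∈ w, 0 < x) ∧ (0 < w.length → w.getD 0 0 = 1) ∧
    ∀ i, i + 1 < w.length → w.getD (i + 1) 0 ≤ w.getD i 0 + 1

/-- structural version -/
def IsCat (w : List ℕ) : Prop :=
  (∀ x ∈ w, 0 < x) ∧ (0 < w.length → w.getD 0 0 = 1) ∧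
    w.IsChain (fun a b => b ≤ a + 1)

lemma chain'_iff_getD {w : List ℕ} :
    w.IsChain (fun a b => b ≤ a + 1) ↔
      ∀ i, i + 1 < w.length → w.getD (i + 1) 0 ≤ w.getD i 0 + 1 := by
  rw [List.isChain_iff_getElem]
  constructor
  · intro h i hi
    rw [List.getD_eq_getElem w 0 hi, List.getD_eq_getElem w 0 (by omega)]
    exact h i (by omega)
  · intro h i hi
    have := h i (by omega)
    rwa [List.getD_eq_getElem w 0 (by omega), List.getD_eq_getElem w 0 (by omega)] at this

lemma isCat_iff (w : List ℕ) : IsCatalanWord w ↔ IsCat w := by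
  unfold IsCatalanWord IsCat
  rw [chain'_iff_getD]

def catW : ℕ → Finset (List ℕ)
  | 0 => {([] : List ℕ)}
  | (m+1) =>
    (Finset.range (m+1)).attach.biUnion fun i =>
      ((catW i.1) ×ˢ (catW (m - i.1))).image
        (fun uv => 1 :: (uv.1.map (· + 1) ++ uv.2))
  decreasing_by
  · exact Finset.mem_range.mp i.2
  · exact Nat.lt_succ_of_le (Nat.sub_le m i.1)

lemma mem_catW : ∀ (m : ℕ) (w : List ℕ), w ∈ catW m ↔ IsCat w ∧ w.length = m := by
  intro m
  induction m using Nat.strong_induction_on with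
  | _ m ih =>
    match m with
    | 0 =>
      intro w
      simp only [catW, Finset.mem_singleton]
      constructor
      · rintro rfl
        exact ⟨⟨by simp, by simp, by simp⟩, rfl⟩
      · rintro ⟨-, hl⟩
        exact List.length_eq_zero_iff.mp hl
    | (m+1) =>
      intro w
      constructor
      · intro hw
        simp only [catW, Finset.mem_biUnion, Finset.mem_attach, Finset.mem_image,
          Finset.mem_product, true_and] at hw
        obtain ⟨⟨i, hi⟩, ⟨u, v⟩, ⟨hu, hv⟩, rfl⟩ := hw
        rw [Finset.mem_range] at hi
        have hi' : i ≤ m := by omega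
        obtain ⟨⟨hupos, huhead, huch⟩, hulen⟩ := (ih i (by omega) u).mp hu
        obtain ⟨⟨hvpos, hvhead, hvch⟩, hvlen⟩ := (ih (m - i) (by omega) v).mp hv
        refine ⟨⟨?_, ?_, ?_⟩, ?_⟩
        · intro x hx
          simp only [List.mem_cons, List.mem_append, List.mem_map] at hx
          rcases hx with rfl | ⟨y, hy, rfl⟩ | hx
          · exact Nat.one_pos
          · omega
          · exact hvpos x hx
        · intro _; rfl
        · rw [List.isChain_cons]
          constructor
          · intro y hy
            rcases u with - | ⟨a, u⟩
            · simp only [List.map_nil, List.nil_append] at hy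
              rcases v with - | ⟨c, v⟩
              · simp at hy
              · simp only [List.head?_cons, Option.mem_some_iff] at hy
                have : c = 1 := by
                  have := hvhead (by simp)
                  simpa using this
                omega
            · simp only [List.map_cons, List.cons_append, List.head?_cons,
                Option.mem_some_iff] at hy
              have : a = 1 := by
                have := huhead (by simp)
                simpa using this
              omega
          · rw [List.isChain_append]
            refine ⟨?_, hvch, ?_⟩
            · rw [List.isChain_map]
              exact huch.imp (fun a b h => by omega)
            · intro x hx y hy
              have hvne : v ≠ [] := by
                intro h; rw [h] at hy; simp at hy
              have : y = 1 := by
                have h0 : 0 < v.length := List.length_pos_iff.mpr hvne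
                have := hvhead h0
                rw [List.getD_eq_getElem v 0 h0] at this
                rw [List.head?_eq_head hvne, Option.mem_some_iff] at hy
                rw [← hy, ← this]
                simp [List.head_eq_getElem]
              omega
        · simp only [List.length_cons, List.length_append, List.length_map, hulen, hvlen]
          omega
      · rintro ⟨⟨hpos, hhead, hch⟩, hlen⟩
        rcases w with - | ⟨a, t⟩
        · simp at hlen
        have ha : a = 1 := by simpa using hhead (by simp)
        subst ha
        have htlen : t.length = m := by simpa using hlen
        set j := t.findIdx (fun x => x == 1) with hj
        have hjle : j ≤ t.length := List.findIdx_le_length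
        have htch : t.IsChain (fun a b => b ≤ a + 1) := hch.tail
        have hsplit : t.take j ++ t.drop j = t := List.take_append_drop j t
        have hchsplit := (List.isChain_append.mp (hsplit ▸ htch))
        have htpos : ∀ k (hk : k < t.length), 0 < t[k] :=
          fun k hk => hpos _ (List.mem_cons_of_mem _ (t.getElem_mem hk))
        have htne1 : ∀ k (hk : k < j), t[k]'(by omega) ≠ 1 := by
          intro k hk
          have := List.not_of_lt_findIdx (p := fun x => x == 1) (hj ▸ hk)
          simpa using this
        -- u and v
        set u := (t.take j).map (· - 1) with hu
        set v := t.drop j with hv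
        have hulen : u.length = j := by simp [hu, List.length_take, hjle]
        have hvlen : v.length = t.length - j := by simp [hv]
        have hucat : u ∈ catW j := by
          rw [ih j (by omega) u]
          refine ⟨⟨?_, ?_, ?_⟩, hulen⟩
          · intro x hx
            simp only [hu, List.mem_map] at hx
            obtain ⟨y, hy, rfl⟩ := hx
            obtain ⟨k, hk, rfl⟩ := List.mem_take_iff_getElem.mp hy
            have h2 : k < j := by omega
            have := htpos k (by omega)
            have := htne1 k h2
            omega
          · intro hul
            rw [hulen] at hul
            have h0j : 0 < j := hul
            have h0t : 0 < t.length := by omega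
            have ht0 : t[0] = 2 := by
              have h1 : t[0] ≤ 2 := by
                have h2 := (chain'_iff_getD.mp hch) 0 (by simpa using h0t)
                rw [List.getD_eq_getElem _ 0 (show (1:ℕ) < (1::t).length by simpa using h0t)] at h2
                simpa using h2
              have := htpos 0 h0t
              have := htne1 0 h0j
              omega
            have hlt : 0 < u.length := by omega
            rw [List.getD_eq_getElem u 0 hlt]
            simp only [hu, List.getElem_map, List.getElem_take]
            rw [ht0]
          · rw [hu, List.isChain_map]
            exact hchsplit.1.imp (fun a b h => by omega)
        have hvcat : v ∈ catW (m - j) := by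
          rw [ih (m - j) (by omega) v]
          refine ⟨⟨?_, ?_, ?_⟩, by omega⟩
          · intro x hx
            exact hpos _ (List.mem_cons_of_mem _ (List.mem_of_mem_drop hx))
          · intro hvl
            have hjlt : j < t.length := by omega
            have : t[j] = 1 := by
              have := @List.findIdx_getElem _ (fun x => x == 1) t (hj ▸ hjlt)
              simpa using this
            rw [List.getD_eq_getElem v 0 hvl]
            simp only [hv, List.getElem_drop]
            simpa using this
          · exact hchsplit.2.1
        have hmap : u.map (· + 1) = t.take j := by
          rw [hu, List.map_map]
          have hcong : ∀ y ∈ t.take j, ((· + 1) ∘ (· - 1)) y = id y := by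
            intro y hy
            obtain ⟨k, hk, rfl⟩ := List.mem_take_iff_getElem.mp hy
            have := htpos k (by omega)
            simp only [Function.comp_apply, id_eq]
            omega
          rw [List.map_congr_left hcong, List.map_id]
        simp only [catW, Finset.mem_biUnion, Finset.mem_attach, Finset.mem_image,
          Finset.mem_product, true_and]
        exact ⟨⟨j, Finset.mem_range.mpr (by omega)⟩, (u, v), ⟨hucat, hvcat⟩,
          by rw [hmap, hv, hsplit]⟩

-- helper: words in catW have positive entries; used for disjointness
lemma catW_pos {m : ℕ} {w : List ℕ} (h : w ∈ catW m) : ∀ x ∈ w, 0 < x :=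
  ((mem_catW m w).mp h).1.1

lemma body_inj_ne {u v u' v' : List ℕ} (hupos : ∀ x ∈ u', 0 < x)
    (hlen : u.length < u'.length)
    (hv : u.length + v.length = u'.length + v'.length)
    (heq : u.map (· + 1) ++ v = u'.map (· + 1) ++ v')
    (hvhead : 0 < v.length → v.getD 0 0 = 1) : False := by
  have hvne : 0 < v.length := by omega
  have h1 : v.getD 0 0 = 1 := hvhead hvne
  have hL : (u.map (· + 1) ++ v).length = u.length + v.length := by simp
  have hidx : u.length < (u.map (· + 1) ++ v).length := by omega
  have e1 : (u.map (· + 1) ++ v)[u.length]'hidx = v[0]'hvne := by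
    rw [List.getElem_append_right (by simp)]
    simp
  have hidx2 : u.length < (u'.map (· + 1)).length := by simpa using hlen
  have e2 : (u'.map (· + 1) ++ v')[u.length]'(heq ▸ hidx) = u'[u.length]'hlen + 1 := by
    rw [List.getElem_append_left hidx2]
    simp
  have e3 : v[0]'hvne = u'[u.length]'hlen + 1 := by
    rw [← e1, ← e2]
    exact List.getElem_of_eq heq hidx
  have := hupos _ (u'.getElem_mem hlen)
  rw [List.getD_eq_getElem v 0 hvne] at h1
  omega

lemma card_catW : ∀ m : ℕ, (catW m).card = catalan m := by
  intro m
  induction m using Nat.strong_induction_on with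
  | _ m ih =>
    match m with
    | 0 => simp [catW]
    | (m+1) =>
      rw [catW, Finset.card_biUnion]
      · have : ∀ i ∈ (Finset.range (m+1)).attach,
            (((catW i.1) ×ˢ (catW (m - i.1))).image
              (fun uv : List ℕ × List ℕ => 1 :: (uv.1.map (· + 1) ++ uv.2))).card
            = catalan i.1 * catalan (m - i.1) := by
          intro i _
          rw [Finset.card_image_of_injOn, Finset.card_product,
            ih i.1 (Finset.mem_range.mp i.2), ih (m - i.1) (Nat.lt_succ_of_le (Nat.sub_le m i.1))]
          intro ⟨u, v⟩ hu ⟨u', v'⟩ hu' heq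
          simp only [Finset.mem_coe, Finset.mem_product] at hu hu'
          have hlu : u.length = i.1 := ((mem_catW _ _).mp hu.1).2
          have hlu' : u'.length = i.1 := ((mem_catW _ _).mp hu'.1).2
          simp only [List.cons.injEq, true_and] at heq
          have h2 := List.append_inj heq (by simp [hlu, hlu'])
          have hmapinj : Function.Injective (fun x : ℕ => x + 1) := add_left_injective 1
          have : u = u' := List.map_injective_iff.mpr hmapinj h2.1
          simp [this, h2.2]
        rw [Finset.sum_congr rfl this, Finset.sum_attach (Finset.range (m+1))
          (fun i => catalan i * catalan (m - i)), catalan_succ']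
        rw [Finset.Nat.sum_antidiagonal_eq_sum_range_succ_mk]
      · intro i _ i' _ hne
        rw [Function.onFun, Finset.disjoint_left]
        rintro w hw hw'
        simp only [Finset.mem_image, Finset.mem_product] at hw hw'
        obtain ⟨⟨u, v⟩, ⟨hu, hv⟩, rfl⟩ := hw
        obtain ⟨⟨u', v'⟩, ⟨hu', hv'⟩, heq⟩ := hw'
        simp only [List.cons.injEq, true_and] at heq
        have hlu : u.length = i.1 := ((mem_catW _ _).mp hu).2
        have hlu' : u'.length = i'.1 := ((mem_catW _ _).mp hu').2
        have hlv : v.length = m - i.1 := ((mem_catW _ _).mp hv).2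
        have hlv' : v'.length = m - i'.1 := ((mem_catW _ _).mp hv').2
        have hii' : i.1 ≠ i'.1 := fun h => hne (Subtype.ext h)
        have him : i.1 < m + 1 := Finset.mem_range.mp i.2
        have him' : i'.1 < m + 1 := Finset.mem_range.mp i'.2
        have hlensum : u.length + v.length = u'.length + v'.length := by omega
        rcases Nat.lt_or_ge u.length u'.length with hl | hl
        · exact body_inj_ne (catW_pos hu') hl hlensum heq.symm
            (((mem_catW _ _).mp hv).1.2.1)
        · have hl' : u'.length < u.length := by omega
          exact body_inj_ne (catW_pos hu) hl' hlensum.symm heq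
            (((mem_catW _ _).mp hv').1.2.1)

def rstart (w : List ℕ) : ℕ → ℕ
  | 0 => 0
  | (b+1) => if w.getD (b+1) 0 < w.getD b 0 then b + 1 else rstart w b

lemma rstart_le (w : List ℕ) (b : ℕ) : rstart w b ≤ b := by
  induction b with
  | zero => simp [rstart]
  | succ b ih =>
    rw [rstart]
    split
    · exact le_refl _
    · omega

lemma rstart_ascent (w : List ℕ) (b : ℕ) :
    ∀ t, rstart w b ≤ t → t < b → w.getD t 0 ≤ w.getD (t + 1) 0 := by
  induction b with
  | zero => omega
  | succ b ih =>
    intro t h1 h2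
    rw [rstart] at h1
    split at h1
    · omega
    · rcases Nat.lt_or_ge t b with h | h
      · exact ih t h1 h
      · have : t = b := by omega
        subst this
        omega

lemma rstart_zero_or_desc (w : List ℕ) (b : ℕ) :
    rstart w b = 0 ∨ w.getD (rstart w b) 0 < w.getD (rstart w b - 1) 0 := by
  induction b with
  | zero => left; rfl
  | succ b ih =>
    rw [rstart]
    split
    · right; rw [Nat.add_sub_cancel]; assumption
    · exact ih

lemma rstart_unique (w : List ℕ) {a b : ℕ} (hab : a ≤ b)
    (hasc : ∀ t, a ≤ t → t < b → w.getD t 0 ≤ w.getD (t + 1) 0)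
    (hstart : a = 0 ∨ w.getD a 0 < w.getD (a - 1) 0) :
    a = rstart w b := by
  rcases lt_trichotomy a (rstart w b) with h | h | h
  · exfalso
    have hne : rstart w b ≠ 0 := by omega
    have hdesc := (rstart_zero_or_desc w b).resolve_left hne
    have h1 : a ≤ rstart w b - 1 := by omega
    have h2 : rstart w b - 1 < b := by have := rstart_le w b; omega
    have := hasc (rstart w b - 1) h1 h2
    have he : rstart w b - 1 + 1 = rstart w b := by omega
    rw [he] at this
    omega
  · exact h
  · exfalso
    rcases hstart with rfl | hdesc
    · omega
    · have h1 : rstart w b ≤ a - 1 := by omega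
      have h2 : a - 1 < b := by omega
      have := rstart_ascent w b (a - 1) h1 h2
      have he : a - 1 + 1 = a := by omega
      rw [he] at this
      omega

def insF (w : List ℕ) : Finset (ℕ × ℕ) :=
  ((Finset.Ico 1 w.length).biUnion fun b =>
    (Finset.Ioc (w.getD b 0) (w.getD (b-1) 0 + 1)).image fun v => (b, v)) ∪
  ((Finset.Ioc 0 (w.getD (w.length - 1) 0 + 1)).image fun v => (w.length, v))

lemma mem_insF {w : List ℕ} {b v : ℕ} :
    (b, v) ∈ insF w ↔
      (1 ≤ b ∧ b < w.length ∧ w.getD b 0 < v ∧ v ≤ w.getD (b-1) 0 + 1) ∨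
      (b = w.length ∧ 0 < v ∧ v ≤ w.getD (w.length - 1) 0 + 1) := by
  simp only [insF, Finset.mem_union, Finset.mem_biUnion, Finset.mem_image,
    Finset.mem_Ico, Finset.mem_Ioc, Prod.mk.injEq]
  constructor
  · rintro (⟨b', ⟨hb1, hb2⟩, v', ⟨hv1, hv2⟩, rfl, rfl⟩ | ⟨v', ⟨hv1, hv2⟩, rfl, rfl⟩)
    · exact Or.inl ⟨hb1, hb2, hv1, hv2⟩
    · exact Or.inr ⟨rfl, hv1, hv2⟩
  · rintro (⟨hb1, hb2, hv1, hv2⟩ | ⟨rfl, hv1, hv2⟩)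
    · exact Or.inl ⟨b, ⟨hb1, hb2⟩, v, ⟨hv1, hv2⟩, rfl, rfl⟩
    · exact Or.inr ⟨v, ⟨hv1, hv2⟩, rfl, rfl⟩

lemma telescope (g : ℕ → ℕ) : ∀ m : ℕ, 1 ≤ m →
    (∀ b, 1 ≤ b → b < m → g b ≤ g (b-1) + 1) →
    (∑ b ∈ Finset.Ico 1 m, (g (b-1) + 1 - g b)) + g (m-1) = m - 1 + g 0 := by
  intro m
  induction m with
  | zero => omega
  | succ m ih =>
    intro _ h
    rcases Nat.eq_or_lt_of_le (show 1 ≤ m + 1 from by omega) with he | hlt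
    · rw [← he]
      simp
    · have hm : 1 ≤ m := by omega
      rw [Finset.sum_Ico_succ_top hm]
      have ihm := ih hm (fun b h1 h2 => h b h1 (by omega))
      have hlast := h m hm (by omega)
      have he : m + 1 - 1 = m := by omega
      rw [he]
      omega

lemma card_insF {m : ℕ} {w : List ℕ} (hw : w ∈ catW m) : (insF w).card = m + 1 := by
  obtain ⟨⟨hpos, hhead, hch⟩, hlen⟩ := (mem_catW m w).mp hw
  have hdisj : Disjoint
      ((Finset.Ico 1 w.length).biUnion fun b =>
        (Finset.Ioc (w.getD b 0) (w.getD (b-1) 0 + 1)).image fun v => (b, v))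
      ((Finset.Ioc 0 (w.getD (w.length - 1) 0 + 1)).image fun v => (w.length, v)) := by
    rw [Finset.disjoint_left]
    rintro ⟨b, v⟩ h1 h2
    simp only [Finset.mem_biUnion, Finset.mem_image, Finset.mem_Ico, Prod.mk.injEq] at h1 h2
    obtain ⟨b', ⟨_, hb2⟩, _, _, rfl, _⟩ := h1
    obtain ⟨_, _, hb, _⟩ := h2
    omega
  rw [insF, Finset.card_union_of_disjoint hdisj, Finset.card_biUnion]
  · have h1 : ∀ b ∈ Finset.Ico 1 w.length,
        ((Finset.Ioc (w.getD b 0) (w.getD (b-1) 0 + 1)).image fun v => (b, v)).card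
        = w.getD (b-1) 0 + 1 - w.getD b 0 := by
      intro b _
      rw [Finset.card_image_of_injective _ (fun x y h => by simpa using h), Nat.card_Ioc]
    rw [Finset.sum_congr rfl h1,
      Finset.card_image_of_injective _ (fun x y h => by simpa using h), Nat.card_Ioc]
    rcases Nat.eq_zero_or_pos m with rfl | hm
    · have hw0 : w = [] := List.length_eq_zero_iff.mp hlen
      subst hw0
      simp
    · have hg := telescope (fun b => w.getD b 0) m hm ?_
      · have hg' : (∑ b ∈ Finset.Ico 1 m, (w.getD (b-1) 0 + 1 - w.getD b 0)) + w.getD (m-1) 0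
            = m - 1 + w.getD 0 0 := hg
        clear hg
        rw [hlen]
        have hh := hhead (by omega)
        omega
      · intro b h1 h2
        have := chain'_iff_getD.mp hch (b-1) (by omega)
        have he : b - 1 + 1 = b := by omega
        rwa [he] at this
  · intro b hb b' hb' hne
    rw [Function.onFun, Finset.disjoint_left]
    rintro ⟨c, v⟩ h1 h2
    simp only [Finset.mem_image, Finset.mem_Ioc, Prod.mk.injEq] at h1 h2
    obtain ⟨_, _, rfl, _⟩ := h1
    obtain ⟨_, _, h, _⟩ := h2
    exact hne h.symm

-- getD lemmas for insertIdx
lemma insertIdx_getD_lt {w : List ℕ} {b v i : ℕ} (hb : b ≤ w.length) (hi : i < b) :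
    (w.insertIdx b v).getD i 0 = w.getD i 0 := by
  have hi' : i < w.length := by omega
  have hi'' : i < (w.insertIdx b v).length := by rw [List.length_insertIdx_of_le_length hb]; omega
  rw [List.getD_eq_getElem _ 0 hi'', List.getD_eq_getElem _ 0 hi']
  exact List.getElem_insertIdx_of_lt hi hi''

lemma insertIdx_getD_self {w : List ℕ} {b v : ℕ} (hb : b ≤ w.length) :
    (w.insertIdx b v).getD b 0 = v := by
  have hb' : b < (w.insertIdx b v).length := by rw [List.length_insertIdx_of_le_length hb]; omega
  rw [List.getD_eq_getElem _ 0 hb']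
  exact List.getElem_insertIdx_self hb'

lemma insertIdx_getD_ge {w : List ℕ} {b v i : ℕ} (hb : b ≤ w.length) (hi : b ≤ i) :
    (w.insertIdx b v).getD (i + 1) 0 = w.getD i 0 := by
  rcases Nat.lt_or_ge i w.length with h | h
  · have hi'' : i + 1 < (w.insertIdx b v).length := by rw [List.length_insertIdx_of_le_length hb]; omega
    rw [List.getD_eq_getElem _ 0 hi'', List.getD_eq_getElem _ 0 h]
    have hk : b + (i - b) = i := by omega
    have := List.getElem_insertIdx_add_succ w v b (i - b) (by omega)
    simpa [hk] using this
  · rw [List.getD_eq_default _ _ (by omega : w.length ≤ i),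
      List.getD_eq_default _ _ (by rw [List.length_insertIdx_of_le_length hb]; omega)]

-- getD lemmas for eraseIdx
lemma eraseIdx_getD_lt {w : List ℕ} {b i : ℕ} (hi : i < b) :
    (w.eraseIdx b).getD i 0 = w.getD i 0 := by
  have hlen : ((w.eraseIdx b).length = w.length - 1 ∧ b < w.length) ∨
      ((w.eraseIdx b).length = w.length ∧ w.length ≤ b) := by
    rw [List.length_eraseIdx]; split <;> [left; right] <;> constructor <;> omega
  rcases Nat.lt_or_ge i (w.eraseIdx b).length with h | h
  · rw [List.getD_eq_getElem _ 0 h, List.getElem_eraseIdx, dif_pos hi,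
      List.getD_eq_getElem _ 0 (by omega)]
  · rw [List.getD_eq_default _ _ h, List.getD_eq_default _ _ (by omega)]

lemma eraseIdx_getD_ge {w : List ℕ} {b i : ℕ} (hb : b < w.length) (hi : b ≤ i) :
    (w.eraseIdx b).getD i 0 = w.getD (i + 1) 0 := by
  rcases Nat.lt_or_ge i (w.eraseIdx b).length with h | h
  · rw [List.getD_eq_getElem _ 0 h, List.getElem_eraseIdx, dif_neg (by omega),
      List.getD_eq_getElem _ 0 (by rw [List.length_eraseIdx, if_pos hb] at h; omega)]
  · rw [List.length_eraseIdx, if_pos hb] at h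
    rw [List.getD_eq_default _ _ (by rw [List.length_eraseIdx, if_pos hb]; omega),
      List.getD_eq_default _ _ (by omega)]

lemma insert_erase_getD (w : List ℕ) : ∀ b, b < w.length →
    (w.eraseIdx b).insertIdx b (w.getD b 0) = w := by
  induction w with
  | nil => intro b hb; simp at hb
  | cons a t ih =>
    intro b hb
    match b with
    | 0 => simp [List.eraseIdx, List.insertIdx]
    | (b+1) =>
      have hb' : b < t.length := by simpa using hb
      simp only [List.eraseIdx_cons_succ, List.getD_cons_succ, List.insertIdx_succ_cons]
      rw [ih b hb']

def runsF (n : ℕ) : Finset (List ℕ × ℕ × ℕ) :=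
  (catW (n-1)).biUnion fun w' =>
    (insF w').image fun bv =>
      (w'.insertIdx bv.1 bv.2, rstart (w'.insertIdx bv.1 bv.2) bv.1, bv.1)

lemma mem_runsF {n : ℕ} (hn : 1 ≤ n) (p : List ℕ × ℕ × ℕ) :
    p ∈ runsF n ↔
      (IsCatalanWord p.1 ∧ p.1.length = n ∧
        p.2.1 ≤ p.2.2 ∧ p.2.2 < n ∧
        (∀ t, p.2.1 ≤ t → t < p.2.2 → p.1.getD t 0 ≤ p.1.getD (t + 1) 0) ∧
        (p.2.1 = 0 ∨ p.1.getD p.2.1 0 < p.1.getD (p.2.1 - 1) 0) ∧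
        (p.2.2 = n - 1 ∨ p.1.getD (p.2.2 + 1) 0 < p.1.getD p.2.2 0)) := by
  constructor
  · intro hp
    simp only [runsF, Finset.mem_biUnion, Finset.mem_image] at hp
    obtain ⟨w', hw', ⟨b, v⟩, hbv, rfl⟩ := hp
    obtain ⟨⟨hpos, hhead, hch⟩, hlen⟩ := (mem_catW _ _).mp hw'
    have hble : b ≤ w'.length := by
      rcases mem_insF.mp hbv with ⟨_, h, _, _⟩ | ⟨h, _, _⟩ <;> omega
    have hvpos : 0 < v := by
      rcases mem_insF.mp hbv with ⟨_, h2, h3, _⟩ | ⟨_, h2, _⟩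
      · have : 0 < w'.getD b 0 + 1 := by omega
        have hp' : 0 < w'.getD b 0 ∨ True := Or.inr trivial
        have : 0 < w'[b]'h2 := hpos _ (w'.getElem_mem h2)
        rw [List.getD_eq_getElem _ 0 h2] at h3
        omega
      · exact h2
    have hvle : v ≤ w'.getD (b - 1) 0 + 1 := by
      rcases mem_insF.mp hbv with ⟨_, _, _, h4⟩ | ⟨hb, _, h3⟩
      · exact h4
      · rw [hb]; exact h3
    have hdesc : b < w'.length → w'.getD b 0 < v := by
      intro hblt
      rcases mem_insF.mp hbv with ⟨_, _, h3, _⟩ | ⟨hb, _, _⟩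
      · exact h3
      · omega
    have hb0 : b = 0 → w'.length = 0 := by
      intro hb
      rcases mem_insF.mp hbv with ⟨h1, _, _, _⟩ | ⟨h1, _, _⟩ <;> omega
    have hwlen : (w'.insertIdx b v).length = n := by
      rw [List.length_insertIdx_of_le_length hble]; omega
    have hchD := chain'_iff_getD.mp hch
    dsimp only
    refine ⟨⟨?_, ?_, ?_⟩, hwlen, rstart_le _ b, by omega, rstart_ascent _ b,
      rstart_zero_or_desc _ b, ?_⟩
    · intro x hx
      rw [List.mem_insertIdx hble] at hx
      rcases hx with rfl | hx
      · exact hvpos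
      · exact hpos x hx
    · intro _
      rcases Nat.eq_zero_or_pos b with rfl | hbpos
      · rw [insertIdx_getD_self hble]
        have h0 : w'.length = 0 := hb0 rfl
        have : w'.getD (0 - 1) 0 = 0 := List.getD_eq_default _ _ (by omega)
        omega
      · rw [insertIdx_getD_lt hble hbpos]
        exact hhead (by omega)
    · intro i hi
      rcases Nat.lt_or_ge (i+1) b with hc | hc
      · rw [insertIdx_getD_lt hble hc, insertIdx_getD_lt hble (by omega)]
        exact hchD i (by omega)
      · rcases Nat.eq_or_lt_of_le hc with hc2 | hc2
        · rw [← hc2, insertIdx_getD_self hble, insertIdx_getD_lt hble (by omega)]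
          have he : i = b - 1 := by omega
          rw [he]
          exact hvle
        · rcases Nat.eq_or_lt_of_le (show b ≤ i by omega) with hc3 | hc3
          · subst hc3
            rw [insertIdx_getD_ge hble (le_refl b), insertIdx_getD_self hble]
            rcases Nat.lt_or_ge b w'.length with h4 | h4
            · have := hdesc h4; omega
            · rw [List.getD_eq_default _ _ h4]; omega
          · have he : i - 1 + 1 = i := by omega
            rw [insertIdx_getD_ge hble (by omega)]
            have h5 : (w'.insertIdx b v).getD i 0 = w'.getD (i-1) 0 := by
              conv_lhs => rw [← he]
              exact insertIdx_getD_ge hble (by omega)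
            rw [h5]
            rcases Nat.lt_or_ge i w'.length with h4 | h4
            · have := hchD (i-1) (by omega)
              rwa [he] at this
            · rw [List.getD_eq_default _ _ h4]
              omega
    · rcases Nat.lt_or_ge b w'.length with h4 | h4
      · right
        rw [insertIdx_getD_ge hble (le_refl b), insertIdx_getD_self hble]
        exact hdesc h4
      · left; omega
  · rintro ⟨hcat, hlen, hab, hbn, hasc, hstart, hend⟩
    obtain ⟨w, a, b⟩ := p
    dsimp only at hcat hlen hab hbn hasc hstart hend ⊢
    obtain ⟨hpos, hhead, hchD⟩ := hcat
    have hb1 : 1 ≤ b ∨ (b = 0 ∧ n = 1) := by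
      rcases Nat.eq_zero_or_pos b with rfl | h
      · right
        refine ⟨rfl, ?_⟩
        by_contra hne
        have hn2 : 2 ≤ n := by omega
        rcases hend with h | h
        · omega
        · have h0 : w.getD 0 0 = 1 := hhead (by omega)
          have h1lt : 1 < w.length := by omega
          have : 0 < w[1]'h1lt := hpos _ (w.getElem_mem h1lt)
          rw [List.getD_eq_getElem _ 0 h1lt] at h
          omega
      · left; exact h
    have hblt : b < w.length := by omega
    have hw'len : (w.eraseIdx b).length = n - 1 := by
      rw [List.length_eraseIdx, if_pos hblt]; omega
    have hlt : ∀ i, i < b → (w.eraseIdx b).getD i 0 = w.getD i 0 :=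
      fun i hi => eraseIdx_getD_lt hi
    have hge : ∀ i, b ≤ i → (w.eraseIdx b).getD i 0 = w.getD (i+1) 0 :=
      fun i hi => eraseIdx_getD_ge hblt hi
    have hw'cat : w.eraseIdx b ∈ catW (n-1) := by
      rw [mem_catW]
      refine ⟨⟨?_, ?_, ?_⟩, hw'len⟩
      · intro x hx
        exact hpos x (List.eraseIdx_subset hx)
      · intro h0
        rw [hw'len] at h0
        have hb1' : 1 ≤ b := by omega
        rw [hlt 0 (by omega)]
        exact hhead (by omega)
      · rw [chain'_iff_getD]
        intro i hi
        rw [hw'len] at hi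
        rcases Nat.lt_or_ge (i+1) b with hc | hc
        · rw [hlt (i+1) hc, hlt i (by omega)]
          exact hchD i (by omega)
        · rcases Nat.eq_or_lt_of_le hc with hc2 | hc2
          · rw [hge (i+1) (by omega), hlt i (by omega)]
            have hdesc : w.getD (b+1) 0 < w.getD b 0 := by
              rcases hend with h | h
              · omega
              · exact h
            have hcb : w.getD b 0 ≤ w.getD (b-1) 0 + 1 := by
              have := hchD (b-1) (by omega)
              have he : b - 1 + 1 = b := by omega
              rwa [he] at this
            have he1 : i = b - 1 := by omega
            rw [he1]
            have he3 : b - 1 + 1 + 1 = b + 1 := by omega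
            rw [he3]
            omega
          · rw [hge (i+1) (by omega), hge i (by omega)]
            exact hchD (i+1) (by omega)
    have hbv : (b, w.getD b 0) ∈ insF (w.eraseIdx b) := by
      rw [mem_insF]
      rcases Nat.eq_or_lt_of_le (show b ≤ n - 1 by omega) with hc | hc
      · right
        refine ⟨by omega, ?_, ?_⟩
        · have : 0 < w[b]'hblt := hpos _ (w.getElem_mem hblt)
          rw [List.getD_eq_getElem _ 0 hblt]; omega
        · rw [hw'len]
          rcases Nat.eq_or_lt_of_le hn with h1 | h1
          · rw [List.getD_eq_default (w.eraseIdx b) _ (by omega)]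
            have hb0 : b = 0 := by omega
            have hh := hhead (by omega)
            rw [hb0]
            omega
          · rw [hlt (n-1-1) (by omega)]
            have hth := hchD (n-1-1) (by omega)
            have he : n - 1 - 1 + 1 = n - 1 := by omega
            rw [he] at hth
            rw [hc]
            exact hth
      · left
        have hbge1 : 1 ≤ b := by omega
        refine ⟨hbge1, by omega, ?_, ?_⟩
        · rw [hge b (le_refl b)]
          rcases hend with h | h
          · omega
          · exact h
        · rw [hlt (b-1) (by omega)]
          have hth := hchD (b-1) (by omega)
          have he : b - 1 + 1 = b := by omega
          rwa [he] at hth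
    simp only [runsF, Finset.mem_biUnion, Finset.mem_image]
    refine ⟨w.eraseIdx b, hw'cat, (b, w.getD b 0), hbv, ?_⟩
    have hins : (w.eraseIdx b).insertIdx b (w.getD b 0) = w := insert_erase_getD w b hblt
    dsimp only
    rw [hins]
    have hra : a = rstart w b := rstart_unique w hab hasc hstart
    rw [← hra]


lemma card_runsF {n : ℕ} (hn : 1 ≤ n) : (runsF n).card = n * catalan (n - 1) := by
  rw [runsF, Finset.card_biUnion]
  · have h1 : ∀ w' ∈ catW (n-1),
        ((insF w').image fun bv : ℕ × ℕ =>
          (w'.insertIdx bv.1 bv.2, rstart (w'.insertIdx bv.1 bv.2) bv.1, bv.1)).card = n := by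
      intro w' hw'
      rw [Finset.card_image_of_injOn, card_insF hw']
      · have := ((mem_catW _ _).mp hw').2
        omega
      · rintro ⟨b, v⟩ hbv ⟨b', v'⟩ hbv' heq
        simp only [Prod.mk.injEq] at heq
        obtain ⟨h1, h2, h3⟩ := heq
        subst h3
        have hble : b ≤ w'.length := by
          rcases mem_insF.mp (Finset.mem_coe.mp hbv) with ⟨_, h, _, _⟩ | ⟨h, _, _⟩ <;> omega
        have hv : v = v' := by
          have e1 : (w'.insertIdx b v).getD b 0 = v := insertIdx_getD_self hble
          have e2 : (w'.insertIdx b v').getD b 0 = v' := insertIdx_getD_self hble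
          rw [← e1, ← e2, h1]
        rw [hv]
    rw [Finset.sum_congr rfl h1, Finset.sum_const, smul_eq_mul, card_catW, mul_comm]
  · rintro w1 hw1 w2 hw2 hne
    rw [Function.onFun, Finset.disjoint_left]
    rintro p hp1 hp2
    simp only [Finset.mem_image] at hp1 hp2
    obtain ⟨⟨b, v⟩, hbv, rfl⟩ := hp1
    obtain ⟨⟨b', v'⟩, hbv', heq⟩ := hp2
    simp only [Prod.mk.injEq] at heq
    obtain ⟨h1, h2, h3⟩ := heq
    subst h3
    apply hne
    have e1 : (w1.insertIdx b' v).eraseIdx b' = w1 := List.eraseIdx_insertIdx_self _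
    have e2 : (w2.insertIdx b' v').eraseIdx b' = w2 := List.eraseIdx_insertIdx_self _
    rw [← e1, ← e2, h1]

/-- Total number of runs of weak ascents (maximal weakly increasing consecutive
substrings, recorded by their start-end index pairs) over all Catalan words
of length n. -/
theorem total_runs_of_weak_ascents (n : ℕ) (hn : 1 ≤ n) :
    Nat.card {p : List ℕ × ℕ × ℕ //
        IsCatalanWord p.1 ∧ p.1.length = n ∧
        p.2.1 ≤ p.2.2 ∧ p.2.2 < n ∧
        (∀ t, p.2.1 ≤ t → t < p.2.2 → p.1.getD t 0 ≤ p.1.getD (t + 1) 0) ∧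
        (p.2.1 = 0 ∨ p.1.getD p.2.1 0 < p.1.getD (p.2.1 - 1) 0) ∧
        (p.2.2 = n - 1 ∨ p.1.getD (p.2.2 + 1) 0 < p.1.getD p.2.2 0)} =
      (2 * n - 2).choose (n - 1) := by
  rw [Nat.card_congr (Equiv.subtypeEquivRight (fun p => (mem_runsF hn p).symm)),
    Nat.card_eq_finsetCard, card_runsF hn]
  obtain ⟨m, rfl⟩ : ∃ m, n = m + 1 := ⟨n - 1, by omega⟩
  have h2 : m + 1 - 1 = m := rfl
  rw [h2, succ_mul_catalan_eq_centralBinom]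
  have h3 : 2 * (m + 1) - 2 = 2 * m := by omega
  rw [h3]
  rfl
end

section
/- For n ≥ 2, the total number of ascents over all Catalan words of length n equals C(2n-1, n-2). -/
def cnt : ℕ → ℕ → ℕ
  | 0, _ => 1
  | m+1, p => ∑ j ∈ Finset.range (p+1), cnt m (j+1)

def amt : ℕ → ℕ → ℕ
  | 0, _ => 0
  | m+1, p => (∑ j ∈ Finset.range (p+1), amt m (j+1)) + cnt m (p+1)

lemma cnt_one (p : ℕ) : cnt 1 p = p + 1 := by
  show (∑ j ∈ Finset.range (p+1), cnt 0 (j+1)) = p + 1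
  simp [cnt]

lemma cnt_closed : ∀ M p, cnt (M+1) p + (2*M+p+2).choose M = (2*M+p+2).choose (M+1) := by
  intro M
  induction M with
  | zero =>
    intro p
    rw [cnt_one]
    simp [Nat.choose_one_right]

  | succ M ih =>
    intro p
    induction p with
    | zero =>
      have hrec : cnt (M+1+1) 0 = ∑ j ∈ Finset.range 1, cnt (M+1) (j+1) := rfl
      rw [hrec, Finset.sum_range_one]
      have h1 := ih 1
      have p2 : (2*M+3+1).choose (M+1+1) = (2*M+3).choose (M+1) + (2*M+3).choose (M+2) := Nat.choose_succ_succ' _ _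
      have p3 : (2*M+3+1).choose (M+1) = (2*M+3).choose M + (2*M+3).choose (M+1) := Nat.choose_succ_succ' _ _
      have sym : (2*M+3).choose (M+2) = (2*M+3).choose (M+1) := by
        have h : (2*M+3) - (M+1) = M+2 := by omega
        have := Nat.choose_symm (n := 2*M+3) (k := M+1) (by omega)
        rw [h] at this
        exact this
      have e1 : 2*M+1+2 = 2*M+3 := by ring
      rw [e1] at h1
      have e2 : 2*(M+1)+0+2 = 2*M+3+1 := by ring
      rw [e2, p2, p3]
      simp only [show (0:ℕ)+1 = 1 from rfl] at *
      omega
    | succ p ihp =>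
      have hrec : cnt (M+1+1) (p+1) = (∑ j ∈ Finset.range (p+1), cnt (M+1) (j+1)) + cnt (M+1) (p+1+1) := by
        show (∑ j ∈ Finset.range (p+2), cnt (M+1) (j+1)) = _
        rw [Finset.sum_range_succ]
      have hrec0 : cnt (M+1+1) p = ∑ j ∈ Finset.range (p+1), cnt (M+1) (j+1) := rfl
      rw [hrec, ← hrec0]
      have h1 := ih (p+2)
      have e1 : 2*M+(p+2)+2 = 2*M+p+4 := by ring
      rw [e1] at h1
      have e2 : 2*(M+1)+(p+1)+2 = (2*M+p+4)+1 := by ring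
      have e3 : 2*(M+1)+p+2 = 2*M+p+4 := by ring
      rw [e2, Nat.choose_succ_succ' (2*M+p+4) (M+1), Nat.choose_succ_succ' (2*M+p+4) M]
      rw [e3] at ihp
      simp only [show p+1+1 = p+2 from rfl] at *
      omega

lemma amt_one (p : ℕ) : amt 1 p = 1 := by
  show (∑ j ∈ Finset.range (p+1), amt 0 (j+1)) + cnt 0 (p+1) = 1
  simp [amt, cnt]

lemma amt_two (q : ℕ) : amt 2 (q+1) = 2*q+5 := by
  show (∑ j ∈ Finset.range (q+2), amt 1 (j+1)) + cnt 1 (q+2) = 2*q+5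
  have h1 : cnt 1 (q+2) = q + 3 := by
    show (∑ j ∈ Finset.range (q+3), cnt 0 (j+1)) = q+3
    simp [cnt]
  simp only [amt_one, h1, Finset.sum_const, Finset.card_range, smul_eq_mul]
  omega

lemma amt_closed : ∀ M q, amt (M+2) (q+1) = (2*M+q+5).choose (M+1) + q * (2*M+q+4).choose M := by
  intro M
  induction M with
  | zero =>
    intro q
    rw [amt_two]
    simp [Nat.choose_one_right]
    omega
  | succ M ih =>
    intro q
    induction q with
    | zero =>
      have hrec : amt (M+3) 1 = (amt (M+2) 1 + amt (M+2) 2) + cnt (M+2) 2 := by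
        show (∑ j ∈ Finset.range 2, amt (M+2) (j+1)) + cnt (M+2) 2 = _
        rw [Finset.sum_range_succ, Finset.sum_range_one]
      have i1 := ih 0
      have i2 := ih 1
      have c2 := cnt_closed (M+1) 2
      have p1 : (2*M+7).choose (M+2) = (2*M+6).choose (M+1) + (2*M+6).choose (M+2) := Nat.choose_succ_succ' (2*M+6) (M+1)
      have p2 : (2*M+6).choose (M+1) = (2*M+5).choose M + (2*M+5).choose (M+1) := Nat.choose_succ_succ' (2*M+5) M
      norm_num at i1 i2
      have e5 : 2*(M+1)+2+2 = 2*M+6 := by ring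
      rw [e5, show M+1+1 = M+2 from rfl] at c2
      have goal_e : 2*(M+1)+0+5 = 2*M+7 := by ring
      rw [goal_e, show M+1+1 = M+2 from rfl, hrec]
      rw [show (2:ℕ)*M+1+5 = 2*M+6 from by ring, show (2:ℕ)*M+1+4 = 2*M+5 from by ring] at i2
      rw [show (2:ℕ)*M+0+5 = 2*M+5 from by ring] at i1
      rw [p1, p2]
      omega
    | succ q ihq =>
      -- atoms
      have h1 : amt (M+3) (q+2) = ((∑ j ∈ Finset.range (q+2), amt (M+2) (j+1)) + amt (M+2) (q+3)) + cnt (M+2) (q+3) := by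
        show (∑ j ∈ Finset.range (q+3), amt (M+2) (j+1)) + cnt (M+2) (q+3) = _
        rw [Finset.sum_range_succ]
      have h2 : amt (M+3) (q+1) = (∑ j ∈ Finset.range (q+2), amt (M+2) (j+1)) + cnt (M+2) (q+2) := rfl
      have h3 := ihq
      have h4 := ih (q+2)
      have h5 := cnt_closed (M+1) (q+2)
      have h6 := cnt_closed (M+1) (q+3)
      have h7 : (2*M+q+7+1).choose (M+1+1) = (2*M+q+7).choose (M+1) + (2*M+q+7).choose (M+2) := Nat.choose_succ_succ' _ _
      have h8 : (2*M+q+6+1).choose (M+1+1) = (2*M+q+6).choose (M+1) + (2*M+q+6).choose (M+2) := Nat.choose_succ_succ' _ _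
      have h9 : (2*M+q+6+1).choose (M+0+1) = (2*M+q+6).choose M + (2*M+q+6).choose (M+1) := Nat.choose_succ_succ' _ _
      have e1 : 2*(M+1)+(q+1)+5 = 2*M+q+7+1 := by ring
      have e2 : 2*(M+1)+(q+1)+4 = 2*M+q+7 := by ring
      have e3 : 2*(M+1)+q+5 = 2*M+q+7 := by ring
      have e4 : 2*(M+1)+q+4 = 2*M+q+6 := by ring
      have e5 : 2*M+(q+2)+5 = 2*M+q+7 := by ring
      have e6 : 2*M+(q+2)+4 = 2*M+q+6 := by ring
      have e7 : 2*(M+1)+(q+2)+2 = 2*M+q+6 := by ring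
      have e8 : 2*(M+1)+(q+3)+2 = 2*M+q+7 := by ring
      rw [e3, e4] at h3
      rw [e5, e6] at h4
      rw [e7] at h5
      rw [e8] at h6
      rw [e1, e2]
      rw [show M+1+1 = M+2 from rfl, show M+0+1 = M+1 from rfl] at *
      rw [show 2*M+q+7+1 = 2*M+q+8 from rfl, show 2*M+q+6+1=2*M+q+7 from rfl] at *
      rw [show q+1+1 = q+2 from rfl, show q+2+1 = q+3 from rfl] at *
      zify at h1 h2 h3 h4 h5 h6 h7 h8 h9 ⊢
      linear_combination h1 - h2 + h3 + h4 + h6 - h7 - ((q:ℤ)+2) * h9 - h5 + h8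

/-- chain relation: next letter is positive and at most prev + 1 -/
def CRel (a b : ℕ) : Prop := 0 < b ∧ b ≤ a + 1

def conts : ℕ → ℕ → List (List ℕ)
  | 0, _ => [[]]
  | m+1, p => (List.range (p+1)).flatMap (fun j => (conts m (j+1)).map ((j+1) :: ·))

def mconts : ℕ → ℕ → List (List ℕ × ℕ)
  | 0, _ => []
  | m+1, p =>
      ((List.range (p+1)).flatMap
        (fun j => (mconts m (j+1)).map (fun q => ((j+1) :: q.1, q.2 + 1))))
      ++ (conts m (p+1)).map (fun c => ((p+1) :: c, 0))

@[simp] lemma chain_nil' {R : ℕ → ℕ → Prop} {a : ℕ} : List.Chain R a [] := List.Chain.nil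

lemma chain_cons' {R : ℕ → ℕ → Prop} {a b : ℕ} {l : List ℕ} :
    List.Chain R a (b :: l) ↔ R a b ∧ List.Chain R b l := List.isChain_cons_cons

def AscAt : ℕ → List ℕ → ℕ → Prop
  | p, v :: _, 0 => p < v
  | _, v :: c, (k+1) => AscAt v c k
  | _, [], _ => False

lemma list_sum_map_range (n : ℕ) (f : ℕ → ℕ) :
    (((List.range n).map f).sum) = ∑ j ∈ Finset.range n, f j := by
  induction n with
  | zero => simp
  | succ n ih => rw [List.range_succ, Finset.sum_range_succ, List.map_append, List.sum_append, ih]; simp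

lemma conts_length (m : ℕ) : ∀ p, (conts m p).length = cnt m p := by
  induction m with
  | zero => intro p; rfl
  | succ m ih =>
    intro p
    show ((List.range (p+1)).flatMap _).length = ∑ j ∈ Finset.range (p+1), cnt m (j+1)
    rw [List.length_flatMap, ← list_sum_map_range (p+1) (fun j => cnt m (j+1))]
    congr 1
    apply List.map_congr_left
    intro j _
    simp [ih]

lemma mconts_length (m : ℕ) : ∀ p, (mconts m p).length = amt m p := by
  induction m with
  | zero => intro p; rfl
  | succ m ih =>
    intro p
    show (_ ++ _ : List _).length = (∑ j ∈ Finset.range (p+1), amt m (j+1)) + cnt m (p+1)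
    rw [List.length_append, List.length_flatMap, List.length_map, conts_length,
      ← list_sum_map_range (p+1) (fun j => amt m (j+1))]
    congr 2
    apply List.map_congr_left
    intro j _
    simp [ih]

lemma mem_conts (m : ℕ) : ∀ p c, c ∈ conts m p ↔ (c.length = m ∧ List.Chain CRel p c) := by
  induction m with
  | zero =>
    intro p c
    constructor
    · rintro h
      simp only [conts, List.mem_singleton] at h
      subst h; simp
    · rintro ⟨h, -⟩
      rw [List.length_eq_zero_iff] at h
      subst h; simp [conts]
  | succ m ih =>
    intro p c
    show c ∈ (List.range (p+1)).flatMap _ ↔ _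
    rw [List.mem_flatMap]
    constructor
    · rintro ⟨j, hj, hc⟩
      rw [List.mem_range] at hj
      rw [List.mem_map] at hc
      obtain ⟨c', hc', rfl⟩ := hc
      obtain ⟨hlen, hchain⟩ := (ih (j+1) c').1 hc'
      refine ⟨by simp [hlen], ?_⟩
      rw [chain_cons']
      exact ⟨⟨Nat.succ_pos j, by omega⟩, hchain⟩
    · rintro ⟨hlen, hchain⟩
      match c with
      | [] => simp at hlen
      | v :: c' =>
        rw [chain_cons'] at hchain
        obtain ⟨⟨hv0, hv1⟩, hchain⟩ := hchain
        refine ⟨v - 1, by rw [List.mem_range]; omega, ?_⟩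
        rw [List.mem_map]
        refine ⟨c', (ih (v-1+1) c').2 ⟨by simpa using hlen, by rwa [show v-1+1 = v by omega]⟩, ?_⟩
        rw [show v-1+1 = v by omega]

lemma mem_mconts (m : ℕ) : ∀ p c i, (c, i) ∈ mconts m p ↔
    (c.length = m ∧ List.Chain CRel p c ∧ AscAt p c i) := by
  induction m with
  | zero =>
    intro p c i
    simp only [mconts, List.not_mem_nil, false_iff]
    rintro ⟨h, -, hasc⟩
    rw [List.length_eq_zero_iff] at h
    subst h
    simpa [AscAt] using hasc
  | succ m ih =>
    intro p c i
    show (c, i) ∈ _ ++ _ ↔ _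
    rw [List.mem_append, List.mem_flatMap, List.mem_map]
    constructor
    · rintro (⟨j, hj, hm⟩ | ⟨c', hc', heq⟩)
      · rw [List.mem_range] at hj
        rw [List.mem_map] at hm
        obtain ⟨⟨c', i'⟩, hm, heq⟩ := hm
        obtain ⟨h1, h2⟩ := Prod.mk.injEq .. ▸ heq
        subst h1; subst h2
        obtain ⟨hlen, hchain, hasc⟩ := (ih (j+1) c' i').1 hm
        refine ⟨by simp [hlen], ?_, ?_⟩
        · rw [chain_cons']; exact ⟨⟨Nat.succ_pos j, by omega⟩, hchain⟩
        · exact hasc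
      · obtain ⟨h1, h2⟩ := Prod.mk.injEq .. ▸ heq
        subst h1; subst h2
        obtain ⟨hlen, hchain⟩ := (mem_conts m (p+1) c').1 hc'
        refine ⟨by simp [hlen], ?_, ?_⟩
        · rw [chain_cons']; exact ⟨⟨Nat.succ_pos p, le_refl _⟩, hchain⟩
        · show p < p + 1; omega
    · rintro ⟨hlen, hchain, hasc⟩
      match c with
      | [] => simp at hlen
      | v :: c' =>
        rw [chain_cons'] at hchain
        obtain ⟨⟨hv0, hv1⟩, hchain⟩ := hchain
        match i with
        | 0 =>
          right
          have hv : v = p + 1 := by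
            have : p < v := hasc
            omega
          subst hv
          exact ⟨c', (mem_conts m (p+1) c').2 ⟨by simpa using hlen, hchain⟩, rfl⟩
        | k+1 =>
          left
          refine ⟨v - 1, by rw [List.mem_range]; omega, ?_⟩
          rw [List.mem_map]
          refine ⟨(c', k), (ih (v-1+1) c' k).2 ⟨by simpa using hlen, ?_, ?_⟩, ?_⟩
          · rwa [show v-1+1 = v by omega]
          · rw [show v-1+1 = v by omega]; exact hasc
          · rw [show v-1+1 = v by omega]

lemma conts_nodup (m : ℕ) : ∀ p, (conts m p).Nodup := by
  induction m with
  | zero => intro p; simp [conts]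
  | succ m ih =>
    intro p
    show ((List.range (p+1)).flatMap _).Nodup
    rw [List.nodup_flatMap]
    constructor
    · intro j _
      exact (ih (j+1)).map (fun a b h => by simpa using h)
    · -- pairwise disjoint: heads differ
      refine List.Pairwise.imp ?_ (List.nodup_range (n := p+1))
      intro a b hab
      intro x hxa hxb
      simp only [Function.onFun, List.mem_map] at hxa hxb
      obtain ⟨ca, _, rfl⟩ := hxa
      obtain ⟨cb, _, h⟩ := hxb
      exact hab (by injection h with h1 _; omega)

lemma mconts_nodup (m : ℕ) : ∀ p, (mconts m p).Nodup := by
  induction m with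
  | zero => intro p; simp [mconts]
  | succ m ih =>
    intro p
    show ((List.range (p+1)).flatMap _ ++ _).Nodup
    rw [List.nodup_append]
    refine ⟨?_, ?_, ?_⟩
    · rw [List.nodup_flatMap]
      constructor
      · intro j _
        exact (ih (j+1)).map (fun a b h => by
          obtain ⟨h1, h2⟩ := Prod.mk.injEq .. ▸ h
          exact Prod.ext (by injection h1) (by omega))
      · refine List.Pairwise.imp ?_ (List.nodup_range (n := p+1))
        intro a b hab x hxa hxb
        simp only [Function.onFun, List.mem_map] at hxa hxb
        obtain ⟨ca, _, rfl⟩ := hxa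
        obtain ⟨cb, _, h⟩ := hxb
        obtain ⟨h1, -⟩ := Prod.mk.injEq .. ▸ h
        exact hab (by injection h1 with h1' _; omega)
    · exact (conts_nodup m (p+1)).map (fun a b h => by injection (Prod.mk.injEq .. ▸ h).1)
    · -- disjoint: snd ≥ 1 vs snd = 0
      intro x hx1 x' hx2 hxx
      subst hxx
      rw [List.mem_flatMap] at hx1
      obtain ⟨j, -, hx1⟩ := hx1
      rw [List.mem_map] at hx1 hx2
      obtain ⟨q, -, rfl⟩ := hx1
      obtain ⟨c, -, h⟩ := hx2
      obtain ⟨-, h2⟩ := Prod.mk.injEq .. ▸ h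
      exact absurd h2 (by omega)

lemma chain_iff_getD : ∀ (c : List ℕ) (p : ℕ), List.Chain CRel p c ↔
    ((∀ x ∈ c, 0 < x) ∧ ∀ i, i + 1 < (p::c).length → (p::c).getD (i+1) 0 ≤ (p::c).getD i 0 + 1) := by
  intro c
  induction c with
  | nil => intro p; simp
  | cons v c' ih =>
    intro p
    rw [chain_cons', ih v]
    constructor
    · rintro ⟨⟨hv0, hv1⟩, hpos, hstep⟩
      refine ⟨?_, ?_⟩
      · intro x hx
        rcases List.mem_cons.1 hx with rfl | hx
        · exact hv0
        · exact hpos x hx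
      · intro i hi
        match i with
        | 0 => simpa using hv1
        | k+1 =>
          simp only [List.getD_cons_succ]
          exact hstep k (by simpa using hi)
    · rintro ⟨hpos, hstep⟩
      refine ⟨⟨hpos v (List.mem_cons_self ..), by simpa using hstep 0 (by simp)⟩, ?_, ?_⟩
      · intro x hx; exact hpos x (List.mem_cons_of_mem _ hx)
      · intro i hi
        have := hstep (i+1) (by simpa using hi)
        simpa using this

lemma ascAt_iff_getD : ∀ (c : List ℕ) (p i : ℕ), AscAt p c i ↔
    (i + 1 < (p::c).length ∧ (p::c).getD i 0 < (p::c).getD (i+1) 0) := by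
  intro c
  induction c with
  | nil =>
    intro p i
    simp only [List.length_cons, List.length_nil]
    constructor
    · intro h; exact absurd h (by simp [AscAt])
    · rintro ⟨h, -⟩; omega
  | cons v c' ih =>
    intro p i
    match i with
    | 0 =>
      simp only [List.getD_cons_zero, List.getD_cons_succ]
      constructor
      · intro h
        exact ⟨by simp, by simpa [AscAt] using h⟩
      · rintro ⟨-, h⟩
        simpa [AscAt] using h
    | k+1 =>
      show AscAt v c' k ↔ _
      rw [ih v k]
      simp [Nat.succ_lt_succ_iff]

lemma iscat_cons (c : List ℕ) : IsCatalanWord (1 :: c) ↔ List.Chain CRel 1 c := by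
  rw [chain_iff_getD]
  unfold IsCatalanWord
  constructor
  · rintro ⟨hpos, -, hstep⟩
    exact ⟨fun x hx => hpos x (List.mem_cons_of_mem _ hx), hstep⟩
  · rintro ⟨hpos, hstep⟩
    refine ⟨?_, by simp, hstep⟩
    intro x hx
    rcases List.mem_cons.1 hx with rfl | hx
    · exact one_pos
    · exact hpos x hx

/-- Total number of ascents over all Catalan words of length n. -/
theorem total_ascents (n : ℕ) (hn : 2 ≤ n) :
    Nat.card {p : List ℕ × ℕ //
        IsCatalanWord p.1 ∧ p.1.length = n ∧
        p.2 + 1 < n ∧ p.1.getD p.2 0 < p.1.getD (p.2 + 1) 0} =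
      (2 * n - 1).choose (n - 2) := by
  classical
  set L : List (List ℕ × ℕ) := (mconts (n-1) 1).map (fun q => (1 :: q.1, q.2)) with hLdef
  have hLnodup : L.Nodup := by
    refine (mconts_nodup (n-1) 1).map ?_
    intro a b h
    obtain ⟨h1, h2⟩ := Prod.mk.injEq .. ▸ h
    exact Prod.ext (by injection h1) h2
  have hmem : ∀ w i, (IsCatalanWord w ∧ w.length = n ∧
      i + 1 < n ∧ w.getD i 0 < w.getD (i + 1) 0) ↔ (w, i) ∈ L := by
    intro w i
    constructor
    · rintro ⟨hcat, hlen, hi, hasc⟩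
      match w with
      | [] => simp at hlen; omega
      | a :: c =>
        have ha : a = 1 := by
          have := hcat.2.1 (by simp)
          simpa using this
        subst ha
        rw [hLdef, List.mem_map]
        refine ⟨(c, i), ?_, rfl⟩
        rw [mem_mconts]
        refine ⟨?_, (iscat_cons c).1 hcat, ?_⟩
        · simp only [List.length_cons] at hlen; omega
        · rw [ascAt_iff_getD]
          exact ⟨by rw [hlen]; exact hi, hasc⟩
    · intro hw
      rw [hLdef, List.mem_map] at hw
      obtain ⟨⟨c, j⟩, hm, heq⟩ := hw
      obtain ⟨h1, h2⟩ := Prod.mk.injEq .. ▸ heq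
      subst h2
      have hw' : w = 1 :: c := h1.symm
      subst hw'
      rw [mem_mconts] at hm
      obtain ⟨hlen, hchain, hasc⟩ := hm
      have hlen' : (1 :: c).length = n := by
        simp only [List.length_cons, hlen]; omega
      have hgd := (ascAt_iff_getD c 1 _).1 hasc
      rw [hlen'] at hgd
      exact ⟨(iscat_cons c).2 hchain, hlen', hgd.1, hgd.2⟩
  have hset : {p : List ℕ × ℕ | IsCatalanWord p.1 ∧ p.1.length = n ∧
      p.2 + 1 < n ∧ p.1.getD p.2 0 < p.1.getD (p.2 + 1) 0} = ↑L.toFinset := by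
    ext ⟨w, i⟩
    simp only [Set.mem_setOf_eq, Finset.coe_sort_coe, Finset.mem_coe, List.mem_toFinset]
    exact hmem w i
  have hcard : Nat.card {p : List ℕ × ℕ //
      IsCatalanWord p.1 ∧ p.1.length = n ∧
      p.2 + 1 < n ∧ p.1.getD p.2 0 < p.1.getD (p.2 + 1) 0} = L.length := by
    rw [show {p : List ℕ × ℕ //
        IsCatalanWord p.1 ∧ p.1.length = n ∧
        p.2 + 1 < n ∧ p.1.getD p.2 0 < p.1.getD (p.2 + 1) 0} =
      ↥{p : List ℕ × ℕ | IsCatalanWord p.1 ∧ p.1.length = n ∧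
      p.2 + 1 < n ∧ p.1.getD p.2 0 < p.1.getD (p.2 + 1) 0} from rfl]
    rw [Nat.card_coe_set_eq, hset, Set.ncard_coe_finset,
      List.toFinset_card_of_nodup hLnodup]
  rw [hcard, hLdef, List.length_map, mconts_length]
  -- amt (n-1) 1 = (2n-1).choose (n-2)
  obtain ⟨k, rfl⟩ : ∃ k, n = k + 2 := ⟨n - 2, by omega⟩
  match k with
  | 0 => simp [amt_one]
  | M+1 =>
    have := amt_closed M 0
    rw [show M+1+2-1 = M+2 from rfl, show (0:ℕ)+1 = 1 from rfl] at *
    rw [this]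
    rw [show 2*(M+1+2)-1 = 2*M+0+5 from by omega, show M+1+2-2 = M+1 from by omega]
    omega
end

section
/- For n ≥ 3, the total number of descents over all Catalan words of length n equals C(2n-2, n-3). -/
open Finset

def lastVal (w : List ℕ) : ℕ := w.getD (w.length - 1) 0

def catF : ℕ → Finset (List ℕ)
  | 0 => {[]}
  | n + 1 => (catF n).biUnion (fun w =>
      (Finset.Icc 1 (lastVal w + 1)).image (fun k => w ++ [k]))

def desc (w : List ℕ) : ℕ :=
  ((Finset.range (w.length - 1)).filter (fun i => w.getD (i + 1) 0 < w.getD i 0)).card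

lemma lastVal_append (u : List ℕ) (k : ℕ) : lastVal (u ++ [k]) = k := by
  simp [lastVal, List.getD_append_right u [k] 0 u.length (by simp)]

lemma length_mem_catF : ∀ {n w}, w ∈ catF n → w.length = n := by
  intro n
  induction n with
  | zero => intro w hw; simp [catF] at hw; simp [hw]
  | succ n ih =>
    intro w hw
    simp only [catF, Finset.mem_biUnion, Finset.mem_image] at hw
    obtain ⟨u, hu, k, _, rfl⟩ := hw
    simp [ih hu]

lemma lastVal_le : ∀ {n w}, w ∈ catF n → lastVal w ≤ n := by
  intro n
  induction n with
  | zero => intro w hw; simp [catF] at hw; simp [hw, lastVal]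
  | succ n ih =>
    intro w hw
    simp only [catF, Finset.mem_biUnion, Finset.mem_image] at hw
    obtain ⟨u, hu, k, hk, rfl⟩ := hw
    rw [lastVal_append]
    simp only [Finset.mem_Icc] at hk
    have := ih hu
    omega

lemma lastVal_pos : ∀ {n w}, w ∈ catF (n + 1) → 1 ≤ lastVal w := by
  intro n w hw
  simp only [catF, Finset.mem_biUnion, Finset.mem_image] at hw
  obtain ⟨u, hu, k, hk, rfl⟩ := hw
  rw [lastVal_append]
  simp only [Finset.mem_Icc] at hk
  omega

lemma desc_append (u : List ℕ) (k : ℕ) :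
    desc (u ++ [k]) = desc u + (if k < lastVal u then 1 else 0) := by
  by_cases hu0 : u = []
  · subst hu0; simp [desc, lastVal]
  have hL : 1 ≤ u.length := List.length_pos_iff.mpr hu0
  set L := u.length with hLdef
  have h1 : (u ++ [k]).length - 1 = L := by simp [hLdef]
  have h2 : L - 1 + 1 = L := by omega
  have key1 : ∀ i, i < L → (u ++ [k]).getD i 0 = u.getD i 0 := fun i hi =>
    List.getD_append u [k] 0 i hi
  have key2 : (u ++ [k]).getD L 0 = k := by
    rw [List.getD_append_right u [k] 0 L (le_refl _)]
    simp [hLdef]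
  rw [desc, h1, desc]
  rw [← h2, Finset.range_add_one, Finset.filter_insert]
  have hfilters : (Finset.range (L - 1)).filter
        (fun i => (u ++ [k]).getD (i + 1) 0 < (u ++ [k]).getD i 0)
      = (Finset.range (L - 1)).filter
        (fun i => u.getD (i + 1) 0 < u.getD i 0) := by
    apply Finset.filter_congr
    intro i hi
    simp only [Finset.mem_range] at hi
    rw [key1 i (by omega), key1 (i+1) (by omega)]
  have hlast : ((u ++ [k]).getD (L - 1 + 1) 0 < (u ++ [k]).getD (L - 1) 0)
      ↔ (k < lastVal u) := by
    rw [h2, key2, key1 (L-1) (by omega)]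
    rfl
  by_cases hc : k < lastVal u
  · rw [if_pos (hlast.mpr hc), if_pos hc]
    rw [Finset.card_insert_of_notMem (by simp), hfilters]
  · rw [if_neg (fun h => hc (hlast.mp h)), if_neg hc]
    rw [hfilters, ← hLdef]
    omega

lemma sum_catF_succ (n : ℕ) (h : List ℕ → ℕ) :
    ∑ w ∈ catF (n + 1), h w
      = ∑ u ∈ catF n, ∑ k ∈ Finset.Icc 1 (lastVal u + 1), h (u ++ [k]) := by
  rw [show catF (n+1) = (catF n).biUnion (fun w =>
      (Finset.Icc 1 (lastVal w + 1)).image (fun k => w ++ [k])) from rfl]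
  rw [Finset.sum_biUnion]
  · refine Finset.sum_congr rfl (fun u hu => ?_)
    exact Finset.sum_image (by intro x _ y _ hxy; simpa using List.append_inj hxy rfl)
  · intro u hu v hv huv
    simp only [Finset.disjoint_left]
    intro a ha hb
    simp only [Finset.mem_image] at ha hb
    obtain ⟨k, _, rfl⟩ := ha
    obtain ⟨k', _, h2⟩ := hb
    have hl : u.length = v.length := by
      rw [length_mem_catF (by simpa using hu : u ∈ catF n),
        length_mem_catF (by simpa using hv : v ∈ catF n)]
    exact huv ((List.append_inj h2.symm hl).1)

def Fc (n m : ℕ) : ℕ := ((catF n).filter (fun w => m ≤ lastVal w)).card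

def Gc (n m : ℕ) : ℕ := ∑ w ∈ (catF n).filter (fun w => m ≤ lastVal w), desc w

lemma Fc_eq_sum (n m : ℕ) :
    Fc n m = ∑ w ∈ catF n, (if m ≤ lastVal w then 1 else 0) := by
  rw [Fc, Finset.card_filter]

lemma Gc_eq_sum (n m : ℕ) :
    Gc n m = ∑ w ∈ catF n, (if m ≤ lastVal w then desc w else 0) := by
  rw [Gc, Finset.sum_filter]

lemma inner1 (m L : ℕ) (hm : 1 ≤ m) :
    ∑ k ∈ Finset.Icc 1 (L + 1), (if m ≤ k then 1 else 0) = L + 2 - m := by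
  rw [← Finset.card_filter]
  have : (Finset.Icc 1 (L + 1)).filter (fun k => m ≤ k) = Finset.Icc m (L + 1) := by
    ext k; simp only [Finset.mem_filter, Finset.mem_Icc]; omega
  rw [this, Nat.card_Icc]

lemma inner2 (m L : ℕ) (hm : 1 ≤ m) :
    ∑ k ∈ Finset.Icc 1 (L + 1), (if m ≤ k then (if k < L then 1 else 0) else 0)
      = L - m := by
  have : ∀ k ∈ Finset.Icc 1 (L+1),
      (if m ≤ k then (if k < L then 1 else 0) else 0) = if m ≤ k ∧ k < L then 1 else 0 := by
    intro k _; by_cases h1 : m ≤ k <;> by_cases h2 : k < L <;> simp [h1, h2]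
  rw [Finset.sum_congr rfl this, ← Finset.card_filter]
  have : (Finset.Icc 1 (L + 1)).filter (fun k => m ≤ k ∧ k < L) = Finset.Icc m (L - 1) := by
    ext k; simp only [Finset.mem_filter, Finset.mem_Icc]; omega
  rw [this, Nat.card_Icc]
  omega

lemma filter_empty_of_big {n m : ℕ} (h : n + 1 ≤ m) :
    (catF n).filter (fun w => m ≤ lastVal w) = ∅ := by
  rw [Finset.filter_eq_empty_iff]
  intro w hw
  have := lastVal_le hw
  omega

lemma Fc_vanish {n m : ℕ} (h : n + 1 ≤ m) : Fc n m = 0 := by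
  rw [Fc, filter_empty_of_big h]; rfl

lemma Gc_vanish {n m : ℕ} (h : n + 1 ≤ m) : Gc n m = 0 := by
  rw [Gc, filter_empty_of_big h]; rfl

lemma Fc_rec (n m : ℕ) (hm : 1 ≤ m) :
    Fc (n + 1) m = Fc (n + 1) (m + 1) + Fc n (m - 1) := by
  rw [Fc_eq_sum, Fc_eq_sum, Fc_eq_sum]
  rw [sum_catF_succ n (fun w => if m ≤ lastVal w then 1 else 0),
      sum_catF_succ n (fun w => if m + 1 ≤ lastVal w then 1 else 0)]
  simp only [lastVal_append]
  rw [← Finset.sum_add_distrib]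
  refine Finset.sum_congr rfl (fun u _ => ?_)
  rw [inner1 m (lastVal u) hm, inner1 (m+1) (lastVal u) (by omega)]
  by_cases h : m - 1 ≤ lastVal u <;> simp [h] <;> omega

lemma Gc_rec (n m : ℕ) (hm : 1 ≤ m) :
    Gc (n + 1) m = Gc (n + 1) (m + 1) + Gc n (m - 1) + Fc n (m + 1) := by
  rw [Gc_eq_sum, Gc_eq_sum, Gc_eq_sum, Fc_eq_sum]
  rw [sum_catF_succ n (fun w => if m ≤ lastVal w then desc w else 0),
      sum_catF_succ n (fun w => if m + 1 ≤ lastVal w then desc w else 0)]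
  simp only [lastVal_append, desc_append]
  rw [← Finset.sum_add_distrib, ← Finset.sum_add_distrib]
  refine Finset.sum_congr rfl (fun u _ => ?_)
  set L := lastVal u with hL
  set d := desc u with hd
  have expand : ∀ m' : ℕ, 1 ≤ m' →
      ∑ k ∈ Finset.Icc 1 (L + 1), (if m' ≤ k then d + (if k < L then 1 else 0) else 0)
        = d * (L + 2 - m') + (L - m') := by
    intro m' hm'
    have step : ∀ k ∈ Finset.Icc 1 (L + 1),
        (if m' ≤ k then d + (if k < L then 1 else 0) else 0)
          = d * (if m' ≤ k then 1 else 0)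
            + (if m' ≤ k then (if k < L then 1 else 0) else 0) := by
      intro k _; by_cases h : m' ≤ k <;> simp [h]
    rw [Finset.sum_congr rfl step, Finset.sum_add_distrib, ← Finset.mul_sum,
        inner1 m' L hm', inner2 m' L hm']
  rw [expand m hm, expand (m + 1) (by omega)]
  by_cases h1 : m + 1 ≤ L
  · obtain ⟨b, hb⟩ : ∃ b, L - m = b + 1 := ⟨L - m - 1, by omega⟩
    rw [if_pos (by omega : m - 1 ≤ L), if_pos h1, hb,
        (by omega : L + 2 - m = b + 3), (by omega : L + 2 - (m + 1) = b + 2),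
        (by omega : L - (m + 1) = b)]
    ring
  · by_cases h2 : m ≤ L
    · rw [if_pos (by omega : m - 1 ≤ L), if_neg h1,
          (by omega : L + 2 - m = 2), (by omega : L + 2 - (m + 1) = 1),
          (by omega : L - m = 0), (by omega : L - (m + 1) = 0)]
      omega
    · by_cases h3 : m ≤ L + 1
      · rw [if_pos (by omega : m - 1 ≤ L), if_neg h1,
            (by omega : L + 2 - m = 1), (by omega : L + 2 - (m + 1) = 0),
            (by omega : L - m = 0), (by omega : L - (m + 1) = 0)]
        omega
      · rw [if_neg (by omega : ¬ m - 1 ≤ L), if_neg h1,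
            (by omega : L + 2 - m = 0), (by omega : L + 2 - (m + 1) = 0),
            (by omega : L - m = 0), (by omega : L - (m + 1) = 0)]

lemma desc_short {w : List ℕ} (h : w.length ≤ 1) : desc w = 0 := by
  have : w.length - 1 = 0 := by omega
  simp [desc, this]

lemma Gc_zero : ∀ n m, n ≤ m + 1 → Gc n m = 0 := by
  intro n
  induction n with
  | zero =>
    intro m _
    rw [Gc]
    refine Finset.sum_eq_zero (fun w hw => ?_)
    exact desc_short (by rw [length_mem_catF (Finset.mem_filter.mp hw).1]; omega)
  | succ n ih =>
    rcases Nat.eq_zero_or_pos n with rfl | hn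
    · intro m _
      rw [Gc]
      refine Finset.sum_eq_zero (fun w hw => ?_)
      exact desc_short (by rw [length_mem_catF (Finset.mem_filter.mp hw).1])
    · have aux : ∀ d m, n ≤ m → n + 2 ≤ m + d → Gc (n + 1) m = 0 := by
        intro d
        induction d with
        | zero => intro m _ h2; exact Gc_vanish (by omega)
        | succ d ihd =>
          intro m h1 h2
          by_cases hbig : n + 2 ≤ m
          · exact Gc_vanish hbig
          · rw [Gc_rec n m (by omega), ihd (m + 1) (by omega) (by omega),
                ih (m - 1) (by omega), Fc_vanish (by omega)]
      intro m hm
      exact aux (n + 2) m (by omega) (by omega)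

lemma Gc_zero_one {n : ℕ} (hn : 1 ≤ n) : Gc n 0 = Gc n 1 := by
  rw [Gc, Gc]
  congr 1
  ext w
  simp only [Finset.mem_filter]
  constructor
  · rintro ⟨hw, -⟩
    refine ⟨hw, ?_⟩
    obtain ⟨n', rfl⟩ : ∃ n', n = n' + 1 := ⟨n - 1, by omega⟩
    exact lastVal_pos hw
  · rintro ⟨hw, -⟩; exact ⟨hw, Nat.zero_le _⟩

lemma filter_one {n : ℕ} (hn : 1 ≤ n) :
    (catF n).filter (fun w => 1 ≤ lastVal w) = catF n := by
  refine Finset.filter_true_of_mem (fun w hw => ?_)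
  obtain ⟨n', rfl⟩ : ∃ n', n = n' + 1 := ⟨n - 1, by omega⟩
  exact lastVal_pos hw

lemma Fc_zero_one {n : ℕ} (hn : 1 ≤ n) : Fc n 0 = Fc n 1 := by
  rw [Fc, Fc, filter_one hn, Finset.filter_true_of_mem (fun w _ => Nat.zero_le _)]

lemma Fc_closed : ∀ n m, m ≤ n →
    Fc n m + (2*n - m).choose (n + 1) = (2*n - m).choose (n - m) := by
  intro n
  induction n with
  | zero =>
    intro m hm
    interval_cases m
    simp [Fc, catF]
  | succ n ih =>
    have aux : ∀ d m, m + d = n + 1 →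
        Fc (n + 1) m + (2*(n+1) - m).choose (n + 1 + 1) = (2*(n+1) - m).choose (n + 1 - m) := by
      intro d
      induction d with
      | zero =>
        intro m hm
        have hm' : m = n + 1 := by omega
        subst hm'
        rw [Fc_rec n (n + 1) (by omega), Fc_vanish (by omega : n + 1 + 1 ≤ n + 2)]
        have e2 := ih n (le_refl n)
        rw [(by omega : 2*n - n = n)] at e2
        rw [(by omega : n + 1 - 1 = n), (by omega : 2*(n+1) - (n+1) = n + 1),
            (by omega : n + 1 - (n + 1) = 0)]
        rw [Nat.choose_eq_zero_of_lt (by omega : n < n + 1)] at e2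
        rw [Nat.choose_eq_zero_of_lt (by omega : n + 1 < n + 2)]
        simp at e2 ⊢
        omega
      | succ d ihd =>
        intro m hm
        rcases Nat.eq_zero_or_pos m with rfl | hm1
        · have e1 := ihd 1 (by omega)
          rw [Fc_zero_one (by omega)]
          rw [(by omega : 2*(n+1) - 1 = 2*n + 1)] at e1
          rw [(by omega : n + 1 - 1 = n)] at e1
          rw [(by omega : 2*(n+1) - 0 = (2*n+1) + 1), (by omega : n + 1 - 0 = n + 1)]
          rw [Nat.choose_succ_succ (2*n+1) (n+1), Nat.choose_succ_succ (2*n+1) n]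
          simp only [Nat.succ_eq_add_one] at *
          omega
        · have e1 := ihd (m + 1) (by omega)
          have e2 := ih (m - 1) (by omega)
          set A := 2*n + 1 - m with hA
          rw [(by omega : 2*(n+1) - (m+1) = A), (by omega : n + 1 - (m + 1) = n - m)] at e1
          rw [(by omega : 2*n - (m-1) = A), (by omega : n - (m-1) = (n - m) + 1)] at e2
          rw [(by omega : 2*(n+1) - m = A + 1), (by omega : n + 1 - m = (n - m) + 1)]
          rw [Fc_rec n m (by omega)]
          rw [Nat.choose_succ_succ A (n+1), Nat.choose_succ_succ A (n - m)]
          simp only [Nat.succ_eq_add_one] at *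
          omega
    intro m hm
    exact aux (n + 1 - m) m (by omega)

lemma Gc_closed : ∀ n m, m ≤ n - 2 →
    Gc n m + n * ((2*n - 2 - m).choose (n + 1)) = (n - 2) * ((2*n - 2 - m).choose (n - 2 - m)) := by
  intro n
  induction n with
  | zero =>
    intro m hm
    have hm0 : m = 0 := by omega
    subst hm0
    rw [Gc_zero 0 0 (by omega)]
    simp
  | succ n ih =>
    rcases Nat.lt_or_ge n 2 with hn | hn
    · interval_cases n
      · intro m hm
        have hm0 : m = 0 := by omega
        subst hm0
        rw [Gc_zero 1 0 (by omega)]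
        simp
      · intro m hm
        have hm0 : m = 0 := by omega
        subst hm0
        rw [Gc_zero_one (by omega), Gc_zero 2 1 (by omega)]
        simp [Nat.choose_eq_zero_of_lt]
    · obtain ⟨p, rfl⟩ : ∃ p, n = p + 2 := ⟨n - 2, by omega⟩
      have aux : ∀ d m, m + d = p + 1 →
          Gc (p + 3) m + (p + 3) * ((2*(p+3) - 2 - m).choose (p + 3 + 1))
            = (p + 3 - 2) * ((2*(p+3) - 2 - m).choose (p + 3 - 2 - m)) := by
        intro d
        induction d with
        | zero =>
          -- m = p + 1 = n - 1, boundary case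
          intro m hm
          have hm' : m = p + 1 := by omega
          subst hm'
          rw [Gc_rec (p+2) (p+1) (by omega)]
          rw [Gc_zero (p+3) (p+2) (by omega)]
          -- Gc (p+2) p = p from ih
          have e2 := ih p (by omega)
          rw [(by omega : 2*(p+2) - 2 - p = p + 2)] at e2
          rw [Nat.choose_eq_zero_of_lt (by omega : p + 2 < p + 2 + 1)] at e2
          rw [(by omega : p + 2 - 2 - p = 0), Nat.choose_zero_right] at e2
          -- Fc (p+2) (p+2) = 1 from Fc_closed
          have e3 := Fc_closed (p+2) (p+2) (le_refl _)
          rw [(by omega : 2*(p+2) - (p+2) = p + 2)] at e3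
          rw [Nat.choose_eq_zero_of_lt (by omega : p + 2 < p + 2 + 1)] at e3
          rw [(by omega : p + 2 - (p+2) = 0), Nat.choose_zero_right] at e3
          rw [(by omega : 2*(p+3) - 2 - (p+1) = p + 3)]
          rw [Nat.choose_eq_zero_of_lt (by omega : p + 3 < p + 3 + 1)]
          rw [(by omega : p + 3 - 2 - (p+1) = 0), Nat.choose_zero_right]
          simp only [show p + 1 - 1 = p from rfl, show p + 1 + 1 = p + 2 from rfl,
            show p + 3 - 2 = p + 1 from rfl] at *
          omega
        | succ d ihd =>
          intro m hm
          rcases Nat.eq_zero_or_pos m with rfl | hm1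
          · -- m = 0 case, via m = 1 and multiplicative identity
            have e1 := ihd 1 (by omega)
            rw [(by omega : 2*(p+3) - 2 - 1 = 2*p + 3)] at e1
            rw [(by omega : p + 3 - 2 - 1 = p)] at e1
            rw [(by omega : p + 3 - 2 = p + 1)] at e1
            rw [(by omega : 2*(p+3) - 2 - 0 = (2*p + 3) + 1)]
            rw [(by omega : p + 3 - 2 - 0 = p + 1)]
            rw [(by omega : p + 3 - 2 = p + 1)]
            rw [Gc_zero_one (by omega : 1 ≤ p + 3)]
            rw [Nat.choose_succ_succ (2*p+3) (p+3), Nat.choose_succ_succ (2*p+3) p]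
            have hsymm : (2*p+3).choose (p+3) = (2*p+3).choose p := by
              rw [← Nat.choose_symm (by omega : p + 3 ≤ 2*p + 3),
                  (by omega : 2*p + 3 - (p + 3) = p)]
            have hmul : (2*p+3).choose (p+1) * (p+1) = (2*p+3).choose p * (p+3) := by
              rw [Nat.choose_succ_right_eq (2*p+3) p, (by omega : 2*p+3-p = p+3)]
            simp only [Nat.succ_eq_add_one] at *
            calc Gc (p+3) 1 + (p+3) * ((2*p+3).choose (p+3) + (2*p+3).choose (p+3+1))
                = (Gc (p+3) 1 + (p+3) * ((2*p+3).choose (p+3+1)))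
                    + (p+3) * ((2*p+3).choose (p+3)) := by ring
              _ = (p+1) * ((2*p+3).choose p) + (p+3) * ((2*p+3).choose (p+3)) := by
                    rw [e1]
              _ = (p+1) * ((2*p+3).choose p) + (p+3) * ((2*p+3).choose p) := by
                    rw [hsymm]
              _ = (p+1) * ((2*p+3).choose p) + (p+1) * ((2*p+3).choose (p+1)) := by
                    rw [mul_comm (p+3) _, ← hmul]; ring
              _ = (p+1) * ((2*p+3).choose p + (2*p+3).choose (p+1)) := by ring
          · -- generic case, 1 ≤ m ≤ p
            have e1 := ihd (m + 1) (by omega)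
            have e2 := ih (m - 1) (by omega)
            have e3 := Fc_closed (p + 2) (m + 1) (by omega)
            rw [(by omega : 2*(p+3) - 2 - (m+1) = 2*p + 3 - m)] at e1
            rw [(by omega : p + 3 - 2 - (m + 1) = p - m)] at e1
            rw [(by omega : p + 3 - 2 = p + 1)] at e1
            rw [(by omega : 2*(p+2) - 2 - (m-1) = 2*p + 3 - m)] at e2
            rw [(by omega : p + 2 - 2 - (m - 1) = (p - m) + 1)] at e2
            rw [(by omega : p + 2 - 2 = p)] at e2
            rw [(by omega : p + 2 + 1 = p + 3)] at e2
            rw [(by omega : 2*(p+2) - (m+1) = 2*p + 3 - m)] at e3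
            rw [(by omega : p + 2 - (m + 1) = (p - m) + 1)] at e3
            rw [(by omega : p + 2 + 1 = p + 3)] at e3
            rw [(by omega : 2*(p+3) - 2 - m = (2*p + 3 - m) + 1)]
            rw [(by omega : p + 3 - 2 - m = (p - m) + 1)]
            rw [(by omega : p + 3 - 2 = p + 1)]
            rw [Gc_rec (p+2) m (by omega)]
            rw [Nat.choose_succ_succ (2*p+3-m) (p+3), Nat.choose_succ_succ (2*p+3-m) (p-m)]
            simp only [Nat.succ_eq_add_one, (by omega : p + 2 + 1 = p + 3)] at *
            set A := 2*p + 3 - m with hA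
            calc Gc (p+3) (m+1) + Gc (p+2) (m-1) + Fc (p+2) (m+1)
                  + (p+3) * (A.choose (p+3) + A.choose (p+3+1))
                = (Gc (p+3) (m+1) + (p+3) * (A.choose (p+3+1)))
                  + (Gc (p+2) (m-1) + (p+2) * (A.choose (p+3)))
                  + (Fc (p+2) (m+1) + A.choose (p+3)) := by ring
              _ = (p+1) * (A.choose (p-m)) + p * (A.choose ((p-m)+1))
                  + A.choose ((p-m)+1) := by rw [e1, e2, e3]
              _ = (p+1) * (A.choose (p-m) + A.choose ((p-m)+1)) := by ring
      intro m hm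
      exact aux (p + 1 - m) m (by omega)

lemma cat_append (u : List ℕ) (k : ℕ) :
    IsCatalanWord (u ++ [k]) ↔ IsCatalanWord u ∧ 1 ≤ k ∧ k ≤ lastVal u + 1 := by
  have key1 : ∀ i, i < u.length → (u ++ [k]).getD i 0 = u.getD i 0 := fun i hi =>
    List.getD_append u [k] 0 i hi
  have key2 : (u ++ [k]).getD u.length 0 = k := by
    rw [List.getD_append_right u [k] 0 u.length (le_refl _)]
    simp
  have hlen : (u ++ [k]).length = u.length + 1 := by simp
  constructor
  · rintro ⟨hpos, hhead, hstep⟩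
    refine ⟨⟨fun x hx => hpos x (List.mem_append_left _ hx), ?_, ?_⟩, ?_, ?_⟩
    · intro h0
      rw [← key1 0 h0]
      exact hhead (by omega)
    · intro i hi
      rw [← key1 i (by omega), ← key1 (i+1) (by omega)]
      exact hstep i (by omega)
    · exact hpos k (List.mem_append_right _ (by simp))
    · rcases Nat.eq_zero_or_pos u.length with h0 | h0
      · have hu : u = [] := List.length_eq_zero_iff.mp h0
        subst hu
        have h1 := hhead (by simp)
        simp at h1
        simp [lastVal]
        omega
      · have := hstep (u.length - 1) (by omega)
        rw [(by omega : u.length - 1 + 1 = u.length), key2,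
            key1 (u.length - 1) (by omega)] at this
        exact this
  · rintro ⟨⟨hpos, hhead, hstep⟩, hk1, hk2⟩
    refine ⟨?_, ?_, ?_⟩
    · intro x hx
      rcases List.mem_append.mp hx with h | h
      · exact hpos x h
      · simp at h; omega
    · intro _
      rcases Nat.eq_zero_or_pos u.length with h0 | h0
      · have hu : u = [] := List.length_eq_zero_iff.mp h0
        subst hu
        simp [lastVal] at hk2
        simp
        omega
      · rw [key1 0 h0]
        exact hhead h0
    · intro i hi
      rw [hlen] at hi
      rcases Nat.lt_or_ge (i + 1) u.length with h | h
      · rw [key1 i (by omega), key1 (i+1) h]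
        exact hstep i h
      · have hi1 : i + 1 = u.length := by omega
        rw [hi1, key2, key1 i (by omega)]
        have : u.getD i 0 = lastVal u := by rw [lastVal, (by omega : u.length - 1 = i)]
        omega

lemma mem_catF : ∀ {n w}, w ∈ catF n ↔ IsCatalanWord w ∧ w.length = n := by
  intro n
  induction n with
  | zero =>
    intro w
    simp only [catF, Finset.mem_singleton]
    constructor
    · rintro rfl
      exact ⟨⟨by simp, by simp, by simp⟩, rfl⟩
    · rintro ⟨-, h⟩
      exact List.length_eq_zero_iff.mp h
  | succ n ih =>
    intro w
    simp only [catF, Finset.mem_biUnion, Finset.mem_image, Finset.mem_Icc]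
    constructor
    · rintro ⟨u, hu, k, hk, rfl⟩
      obtain ⟨hcat, hlenu⟩ := ih.mp hu
      exact ⟨(cat_append u k).mpr ⟨hcat, hk.1, hk.2⟩, by simp [hlenu]⟩
    · rintro ⟨hcat, hlen⟩
      rcases List.eq_nil_or_concat w with rfl | ⟨u, k, rfl⟩
      · simp at hlen
      · rw [List.concat_eq_append] at hcat hlen ⊢
        obtain ⟨hcatu, hk1, hk2⟩ := (cat_append u k).mp hcat
        have hlenu : u.length = n := by simp at hlen; omega
        exact ⟨u, ih.mpr ⟨hcatu, hlenu⟩, k, ⟨hk1, hk2⟩, rfl⟩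

/-- Total number of descents over all Catalan words of length n. -/
theorem total_descents (n : ℕ) (hn : 3 ≤ n) :
    Nat.card {p : List ℕ × ℕ //
        IsCatalanWord p.1 ∧ p.1.length = n ∧
        p.2 + 1 < n ∧ p.1.getD (p.2 + 1) 0 < p.1.getD p.2 0} =
      (2 * n - 2).choose (n - 3) := by
  classical
  set P := (catF n).biUnion (fun w =>
    ((Finset.range (n-1)).filter (fun i => w.getD (i+1) 0 < w.getD i 0)).image
      (fun i => (w, i))) with hP
  have hmemP : ∀ p : List ℕ × ℕ,
      (IsCatalanWord p.1 ∧ p.1.length = n ∧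
        p.2 + 1 < n ∧ p.1.getD (p.2 + 1) 0 < p.1.getD p.2 0) ↔ p ∈ P := by
    intro p
    constructor
    · rintro ⟨h1, h2, h3, h4⟩
      refine Finset.mem_biUnion.mpr ⟨p.1, mem_catF.mpr ⟨h1, h2⟩,
        Finset.mem_image.mpr ⟨p.2, Finset.mem_filter.mpr
          ⟨Finset.mem_range.mpr (by omega), h4⟩, by simp⟩⟩
    · intro hp
      obtain ⟨w, hw, hi⟩ := Finset.mem_biUnion.mp hp
      obtain ⟨i, hif, rfl⟩ := Finset.mem_image.mp hi
      obtain ⟨hir, hdesc⟩ := Finset.mem_filter.mp hif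
      obtain ⟨hcat, hlen⟩ := mem_catF.mp hw
      have := Finset.mem_range.mp hir
      exact ⟨hcat, hlen, by omega, hdesc⟩
  have hcard1 : Nat.card {p : List ℕ × ℕ //
      IsCatalanWord p.1 ∧ p.1.length = n ∧
        p.2 + 1 < n ∧ p.1.getD (p.2 + 1) 0 < p.1.getD p.2 0} = P.card := by
    rw [Nat.card_congr (Equiv.subtypeEquivRight hmemP)]
    exact Nat.card_eq_finsetCard P
  rw [hcard1]
  have hcard2 : P.card = Gc n 0 := by
    rw [hP, Finset.card_biUnion]
    · rw [Gc, Finset.filter_true_of_mem (fun w _ => Nat.zero_le _)]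
      refine Finset.sum_congr rfl (fun w hw => ?_)
      rw [Finset.card_image_of_injective _ (fun a b hab => by
        simpa using (Prod.mk.injEq _ _ _ _ ▸ hab).2)]
      rw [desc, length_mem_catF hw]
    · intro x hx y hy hxy
      simp only [Finset.disjoint_left]
      intro a ha hb
      obtain ⟨i, -, rfl⟩ := Finset.mem_image.mp ha
      obtain ⟨j, -, hji⟩ := Finset.mem_image.mp hb
      exact hxy (congrArg Prod.fst hji).symm
  rw [hcard2]
  have h1 := Gc_closed n 0 (by omega)
  rw [(by omega : 2*n - 2 - 0 = 2*n - 2), (by omega : n - 2 - 0 = n - 2)] at h1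
  have hsym : (2*n - 2).choose (n + 1) = (2*n - 2).choose (n - 3) := by
    rw [← Nat.choose_symm (by omega : n + 1 ≤ 2*n - 2),
        (by omega : 2*n - 2 - (n + 1) = n - 3)]
  rw [hsym] at h1
  have hmul : (2*n - 2).choose (n - 2) * (n - 2) = (2*n - 2).choose (n - 3) * (n + 1) := by
    have := Nat.choose_succ_right_eq (2*n - 2) (n - 3)
    rw [(by omega : n - 3 + 1 = n - 2), (by omega : 2*n - 2 - (n - 3) = n + 1)] at this
    exact this
  have h2 : (n - 2) * ((2*n - 2).choose (n - 2))
      = n * ((2*n - 2).choose (n - 3)) + (2*n - 2).choose (n - 3) := by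
    rw [mul_comm, hmul]
    ring
  rw [h2] at h1
  generalize n * ((2*n - 2).choose (n - 3)) = t at h1
  omega
end

section
/- For n ≥ 1, C_n = ∑_{k=0}^{⌊(n-1)/2⌋} (1/(k+1))·C(n-1,k)·C(n-k-1,k)·2^{n-2k-1}, where C_n is the n-th Catalan number. -/
open Finset

/-- Extended summand of the Touchard identity (zero outside the natural range). -/
noncomputable def fT (m k : ℕ) : ℚ :=
  if 2 * k ≤ m then
    (Nat.choose m k : ℚ) * (Nat.choose (m - k) k) * 2 ^ (m - 2 * k) / (k + 1)
  else 0

/-- Zeilberger certificate for the Touchard identity. -/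
noncomputable def bT (m k : ℕ) : ℚ :=
  if 2 * k ≤ m + 1 then
    -4 * (k : ℚ) * (Nat.choose m k) * (Nat.choose (m + 1 - k) k) * 2 ^ (m + 1 - 2 * k)
      / ((m + 1 - k : ℕ) : ℚ)
  else 0

lemma keyT (m k : ℕ) :
    ((m : ℚ) + 3) * fT (m + 1) k - 2 * (2 * m + 3) * fT m k = bT m (k + 1) - bT m k := by
  rcases le_or_gt (2 * k) m with h | h
  · -- 2k ≤ m : write m = 2k + j
    obtain ⟨j, rfl⟩ : ∃ j, m = 2 * k + j := ⟨m - 2 * k, by omega⟩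
    rcases Nat.eq_zero_or_pos j with rfl | hj
    · -- case B : m = 2k
      have hb1 : ¬ (2 * (k + 1) ≤ 2 * k + 0 + 1) := by omega
      simp only [fT, bT, if_pos (by omega : 2 * k ≤ 2 * k + 0 + 1),
        if_pos (by omega : 2 * k ≤ 2 * k + 0), if_neg hb1,
        if_pos (by omega : 2 * k ≤ 2 * k + 0 + 1)]
      rw [show 2 * k + 0 + 1 - k = k + 1 by omega, show 2 * k + 0 + 1 - 2 * k = 1 by omega,
        show 2 * k + 0 - k = k by omega, show 2 * k + 0 - 2 * k = 0 by omega]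
      have hk1 : ((k : ℚ) + 1) ≠ 0 := by positivity
      have hD : ((2 * k + 1).choose k : ℚ) = ((2 * k).choose k : ℚ) * (2 * k + 1) / (k + 1) := by
        rw [eq_div_iff hk1]
        have := Nat.choose_mul_succ_eq (2 * k) k
        rw [show 2 * k + 1 - k = k + 1 by omega] at this
        have := (congrArg (Nat.cast : ℕ → ℚ) this).symm
        push_cast at this ⊢
        linarith
      have hck : ((k + 1).choose k : ℚ) = (k : ℚ) + 1 := by
        rw [Nat.choose_succ_self_right]; push_cast; ring
      rw [hD, hck]
      push_cast [Nat.choose_self]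
      field_simp
      ring
    · -- case A : m = 2k + i + 1
      obtain ⟨i, rfl⟩ : ∃ i, j = i + 1 := ⟨j - 1, by omega⟩
      have c1 : 2 * k ≤ 2 * k + (i + 1) + 1 := by omega
      have c2 : 2 * k ≤ 2 * k + (i + 1) := by omega
      have c3 : 2 * (k + 1) ≤ 2 * k + (i + 1) + 1 := by omega
      simp only [fT, bT, if_pos c1, if_pos c2, if_pos c3]
      rw [show 2 * k + (i + 1) + 1 - k = k + i + 2 by omega,
        show 2 * k + (i + 1) + 1 - 2 * k = i + 2 by omega,
        show 2 * k + (i + 1) - k = k + i + 1 by omega,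
        show 2 * k + (i + 1) - 2 * k = i + 1 by omega,
        show 2 * k + (i + 1) + 1 - (k + 1) = k + i + 1 by omega,
        show 2 * k + (i + 1) + 1 - 2 * (k + 1) = i by omega]
      set a : ℚ := ((2 * k + (i + 1)).choose k : ℚ) with ha
      set c : ℚ := ((k + i + 1).choose k : ℚ) with hc
      have hk1 : ((k : ℚ) + 1) ≠ 0 := by positivity
      have hki1 : ((k : ℚ) + i + 1) ≠ 0 := by positivity
      have hki2 : ((k : ℚ) + i + 2) ≠ 0 := by positivity
      have hi2 : ((i : ℚ) + 2) ≠ 0 := by positivity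
      have hD1 : ((2 * k + (i + 1) + 1).choose k : ℚ) = a * (2 * k + i + 2) / (k + i + 2) := by
        rw [eq_div_iff hki2]
        have := Nat.choose_mul_succ_eq (2 * k + (i + 1)) k
        rw [show 2 * k + (i + 1) + 1 - k = k + i + 2 by omega] at this
        have := (congrArg (Nat.cast : ℕ → ℚ) this).symm
        rw [ha]; push_cast at this ⊢; linarith
      have hD2 : ((k + i + 2).choose k : ℚ) = c * (k + i + 2) / ((i : ℚ) + 2) := by
        rw [eq_div_iff hi2]
        have := Nat.choose_mul_succ_eq (k + i + 1) k
        rw [show k + i + 1 + 1 - k = i + 2 by omega,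
          show k + i + 1 + 1 = k + i + 2 by omega] at this
        have := (congrArg (Nat.cast : ℕ → ℚ) this).symm
        rw [hc]; push_cast at this ⊢; linarith
      have hD3 : ((2 * k + (i + 1)).choose (k + 1) : ℚ) = a * (k + i + 1) / ((k : ℚ) + 1) := by
        rw [eq_div_iff hk1]
        have := Nat.choose_succ_right_eq (2 * k + (i + 1)) k
        rw [show 2 * k + (i + 1) - k = k + i + 1 by omega] at this
        have := congrArg (Nat.cast : ℕ → ℚ) this
        rw [ha]; push_cast at this ⊢; linarith
      have hD4 : ((k + i + 1).choose (k + 1) : ℚ) = c * (i + 1) / ((k : ℚ) + 1) := by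
        rw [eq_div_iff hk1]
        have := Nat.choose_succ_right_eq (k + i + 1) k
        rw [show k + i + 1 - k = i + 1 by omega] at this
        have := congrArg (Nat.cast : ℕ → ℚ) this
        rw [hc]; push_cast at this ⊢; linarith
      rw [hD1, hD2, hD3, hD4]
      push_cast
      field_simp
      ring
  · rcases eq_or_lt_of_le (by omega : m + 1 ≤ 2 * k) with h2 | h2
    · -- case C : 2k = m+1, k ≥ 1
      obtain ⟨l, rfl⟩ : ∃ l, k = l + 1 := ⟨k - 1, by omega⟩
      have hm : m = 2 * l + 1 := by omega
      subst hm
      have c1 : 2 * (l + 1) ≤ 2 * l + 1 + 1 := by omega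
      have c2 : ¬ (2 * (l + 1) ≤ 2 * l + 1) := by omega
      have c3 : ¬ (2 * (l + 1 + 1) ≤ 2 * l + 1 + 1) := by omega
      simp only [fT, bT, if_pos c1, if_neg c2, if_neg c3]
      rw [show 2 * l + 1 + 1 - (l + 1) = l + 1 by omega,
        show 2 * l + 1 + 1 - 2 * (l + 1) = 0 by omega]
      have hr : ((2 * l + 1 + 1).choose (l + 1) : ℚ) = 2 * ((2 * l + 1).choose (l + 1) : ℚ) := by
        have hone : (2 * l + 1).choose l = (2 * l + 1).choose (l + 1) := by
          rw [← Nat.choose_symm (by omega : l + 1 ≤ 2 * l + 1),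
            show 2 * l + 1 - (l + 1) = l by omega]
        have hps : (2 * l + 1 + 1).choose (l + 1) =
            (2 * l + 1).choose l + (2 * l + 1).choose (l + 1) :=
          Nat.choose_succ_succ (2 * l + 1) l
        rw [hps, hone]
        push_cast; ring
      have hcs : ((l + 1).choose (l + 1) : ℚ) = 1 := by
        rw [Nat.choose_self]; norm_num
      rw [hcs, hr]
      have hl1 : ((l : ℚ) + 1) ≠ 0 := by positivity
      have hl2 : ((l : ℚ) + 2) ≠ 0 := by positivity
      push_cast
      field_simp
      ring
    · -- case D : 2k ≥ m+2 : everything is zero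
      have c1 : ¬ (2 * k ≤ m + 1) := by omega
      have c2 : ¬ (2 * k ≤ m) := by omega
      have c3 : ¬ (2 * (k + 1) ≤ m + 1) := by omega
      simp only [fT, bT, if_neg c1, if_neg c2, if_neg c3]
      ring

lemma sumT_rec (m : ℕ) :
    ((m : ℚ) + 3) * (∑ k ∈ Finset.range (m + 3), fT (m + 1) k) =
      2 * (2 * m + 3) * (∑ k ∈ Finset.range (m + 3), fT m k) := by
  have htel : ∑ k ∈ Finset.range (m + 3), (bT m (k + 1) - bT m k) = bT m (m + 3) - bT m 0 :=
    Finset.sum_range_sub (bT m) (m + 3)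
  have hb0 : bT m 0 = 0 := by simp [bT]
  have hbtop : bT m (m + 3) = 0 := by
    rw [bT, if_neg (by omega)]
  have hsum : ∑ k ∈ Finset.range (m + 3),
      (((m : ℚ) + 3) * fT (m + 1) k - 2 * (2 * m + 3) * fT m k) = 0 := by
    calc ∑ k ∈ Finset.range (m + 3),
        (((m : ℚ) + 3) * fT (m + 1) k - 2 * (2 * m + 3) * fT m k)
        = ∑ k ∈ Finset.range (m + 3), (bT m (k + 1) - bT m k) :=
          Finset.sum_congr rfl fun k _ => keyT m k
      _ = 0 := by rw [htel, hb0, hbtop]; ring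
  rw [Finset.sum_sub_distrib, ← Finset.mul_sum, ← Finset.mul_sum] at hsum
  linarith

lemma catalan_rec (m : ℕ) :
    ((m : ℚ) + 3) * (catalan (m + 2) : ℚ) = 2 * (2 * m + 3) * (catalan (m + 1) : ℚ) := by
  have h1 : ((m + 2 : ℕ) + 1) * catalan (m + 2) = Nat.centralBinom (m + 2) :=
    succ_mul_catalan_eq_centralBinom (m + 2)
  have h2 : ((m + 1 : ℕ) + 1) * catalan (m + 1) = Nat.centralBinom (m + 1) :=
    succ_mul_catalan_eq_centralBinom (m + 1)
  have h3 : ((m + 1 : ℕ) + 1) * Nat.centralBinom (m + 1 + 1) =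
      2 * (2 * (m + 1) + 1) * Nat.centralBinom (m + 1) :=
    Nat.succ_mul_centralBinom_succ (m + 1)
  have q1 : ((m : ℚ) + 3) * (catalan (m + 2) : ℚ) = (Nat.centralBinom (m + 2) : ℚ) := by
    exact_mod_cast congrArg (Nat.cast : ℕ → ℚ) h1
  have q2 : ((m : ℚ) + 2) * (catalan (m + 1) : ℚ) = (Nat.centralBinom (m + 1) : ℚ) := by
    exact_mod_cast congrArg (Nat.cast : ℕ → ℚ) h2
  have q3 : ((m : ℚ) + 2) * (Nat.centralBinom (m + 2) : ℚ) =
      2 * (2 * m + 3) * (Nat.centralBinom (m + 1) : ℚ) := by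
    exact_mod_cast congrArg (Nat.cast : ℕ → ℚ) h3
  have hm2 : ((m : ℚ) + 2) ≠ 0 := by positivity
  have : ((m : ℚ) + 2) * (((m : ℚ) + 3) * (catalan (m + 2) : ℚ)) =
      ((m : ℚ) + 2) * (2 * (2 * m + 3) * (catalan (m + 1) : ℚ)) := by
    rw [q1, q3, ← q2]; ring
  exact mul_left_cancel₀ hm2 this

lemma catalan_eq_sumT (m : ℕ) :
    (catalan (m + 1) : ℚ) = ∑ k ∈ Finset.range (m + 2), fT m k := by
  induction m with
  | zero =>
    rw [Finset.sum_range_succ, Finset.sum_range_one]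
    norm_num [fT, catalan_one]
  | succ m ih =>
    have hS := sumT_rec m
    have hC := catalan_rec m
    have hext : ∑ k ∈ Finset.range (m + 3), fT m k = ∑ k ∈ Finset.range (m + 2), fT m k := by
      rw [Finset.sum_range_succ]
      have : fT m (m + 2) = 0 := by rw [fT, if_neg (by omega)]
      rw [this, add_zero]
    rw [hext, ← ih] at hS
    have hm3 : ((m : ℚ) + 3) ≠ 0 := by positivity
    have : ((m : ℚ) + 3) * (catalan (m + 2) : ℚ) =
        ((m : ℚ) + 3) * (∑ k ∈ Finset.range (m + 1 + 2), fT (m + 1) k) := by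
      rw [hC, hS]
    exact mul_left_cancel₀ hm3 this

theorem catalan_identity' (n : ℕ) (hn : 1 ≤ n) :
    (catalan n : ℚ) =
      ∑ k ∈ Finset.range ((n - 1) / 2 + 1),
        (1 / ((k : ℚ) + 1)) * ((n - 1).choose k) * ((n - k - 1).choose k) *
          2 ^ (n - 2 * k - 1) := by
  obtain ⟨m, rfl⟩ : ∃ m, n = m + 1 := ⟨n - 1, by omega⟩
  rw [catalan_eq_sumT m]
  have hsub : Finset.range (m / 2 + 1) ⊆ Finset.range (m + 2) :=
    Finset.range_subset_range.2 (by omega)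
  rw [show m + 1 - 1 = m by omega]
  rw [← Finset.sum_subset hsub (fun k _ hk => by
    rw [fT, if_neg]
    rw [Finset.mem_range, not_lt] at hk
    omega)]
  refine Finset.sum_congr rfl fun k hk => ?_
  rw [Finset.mem_range] at hk
  have h2k : 2 * k ≤ m := by omega
  rw [fT, if_pos h2k]
  rw [show m + 1 - k - 1 = m - k by omega, show m + 1 - 2 * k - 1 = m - 2 * k by omega]
  ring
end

section
/- For n ≥ 2, ∑_{j=0}^{n-2k-1} C(n-j-1, k)·C(n-j-k-1, k)·C(n-1, j) = C(n-1,k)·C(n-k-1,k)·2^{n-2k-1} for all 0 ≤ k ≤ ⌊(n-1)/2⌋. -/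
lemma trinom_rev {n j k : ℕ} (h : j + k ≤ n) :
    n.choose j * (n - j).choose k = n.choose k * (n - k).choose j := by
  have h1 := Nat.choose_mul (n := n) (Nat.le_add_right j k)
  have h2 := Nat.choose_mul (n := n) (Nat.le_add_left k j)
  rw [Nat.add_sub_cancel_left] at h1
  rw [Nat.add_sub_cancel] at h2
  rw [← h1, ← h2, Nat.choose_symm_add]

theorem binomial_identity (n k : ℕ) (hn : 2 ≤ n) (hk : k ≤ (n - 1) / 2) :
    ∑ j ∈ Finset.range (n - 2 * k),
        (n - j - 1).choose k * (n - j - k - 1).choose k * (n - 1).choose j =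
      (n - 1).choose k * (n - k - 1).choose k * 2 ^ (n - 2 * k - 1) := by
  obtain ⟨t, rfl⟩ : ∃ t, n = 2 * k + t + 1 := ⟨n - 2 * k - 1, by omega⟩
  have hr : 2 * k + t + 1 - 2 * k = t + 1 := by omega
  rw [hr]
  have key : ∀ j ∈ Finset.range (t + 1),
      (2 * k + t + 1 - j - 1).choose k * (2 * k + t + 1 - j - k - 1).choose k *
        (2 * k + t + 1 - 1).choose j =
      (2 * k + t).choose k * (k + t).choose k * t.choose j := by
    intro j hj
    have hjt : j < t + 1 := Finset.mem_range.mp hj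
    have e1 : 2 * k + t + 1 - j - 1 = 2 * k + t - j := by omega
    have e2 : 2 * k + t + 1 - j - k - 1 = k + t - j := by omega
    have e3 : 2 * k + t + 1 - 1 = 2 * k + t := by omega
    rw [e1, e2, e3]
    have h1 : (2 * k + t).choose j * (2 * k + t - j).choose k =
        (2 * k + t).choose k * (2 * k + t - k).choose j := trinom_rev (by omega)
    have h2 : (k + t).choose j * (k + t - j).choose k =
        (k + t).choose k * (k + t - k).choose j := trinom_rev (by omega)
    have e4 : 2 * k + t - k = k + t := by omega
    have e5 : k + t - k = t := by omega
    rw [e4] at h1; rw [e5] at h2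
    calc (2 * k + t - j).choose k * (k + t - j).choose k * (2 * k + t).choose j
        = ((2 * k + t).choose j * (2 * k + t - j).choose k) * (k + t - j).choose k := by ring
      _ = ((2 * k + t).choose k * (k + t).choose j) * (k + t - j).choose k := by rw [h1]
      _ = (2 * k + t).choose k * ((k + t).choose j * (k + t - j).choose k) := by ring
      _ = (2 * k + t).choose k * ((k + t).choose k * t.choose j) := by rw [h2]
      _ = (2 * k + t).choose k * (k + t).choose k * t.choose j := by ring
  rw [Finset.sum_congr rfl key, ← Finset.mul_sum, Nat.sum_range_choose]
  have e6 : 2 * k + t + 1 - 1 = 2 * k + t := by omega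
  have e7 : 2 * k + t + 1 - k - 1 = k + t := by omega
  
  rw [e6, e7, Nat.add_sub_cancel]
end

section
/- For n ≥ 1, the sum of the semi-perimeters of the bargraphs of all Catalan words of length n equals (1/2)·(C(2n+2, n+1) − C(2n, n)). -/
open Finset

/-- The perimeter of the bargraph of a word: 2·(length) horizontal edge length
(bottom plus top) plus the vertical edge lengths: the first column height, the
last column height, and the absolute differences of consecutive heights. -/
def bargraphPerimeter (w : List ℕ) : ℕ :=
  2 * w.length + w.getD 0 0 + w.getD (w.length - 1) 0 +
    ∑ i ∈ Finset.range (w.length - 1), Nat.dist (w.getD i 0) (w.getD (i + 1) 0)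

/-- Predicate for reversed Catalan words. -/
def RC : List ℕ → Prop
  | [] => True
  | x :: v => 1 ≤ x ∧ x ≤ v.headD 0 + 1 ∧ RC v

/-- Finset of reversed Catalan words of length n. -/
def R : ℕ → Finset (List ℕ)
  | 0 => {([] : List ℕ)}
  | n+1 => (R n).biUnion (fun w => (Finset.range (w.headD 0 + 1)).image (fun x => (x+1) :: w))

/-- Semiperimeter of a reversed word. -/
def sp : List ℕ → ℕ
  | [] => 0
  | x :: v => sp v + 1 + (if x = v.headD 0 + 1 then 1 else 0)

noncomputable def ch (m r : ℕ) : ℚ := (Nat.choose m r : ℚ)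

noncomputable def Ah (n k : ℕ) : ℚ :=
  if k ≤ n then ch (2*n - k - 1) (n-1) - ch (2*n - k - 1) (n+1) else 0

noncomputable def Bh (n k : ℕ) : ℚ :=
  if k ≤ n then 2*k * ch (2*n - k - 1) (n-1) + (k+2) * ch (2*n - k - 1) n
    + ch (2*n - k - 1) (n+1) else 0

noncomputable def Afc (n k : ℕ) : ℚ := Ah n k - Ah n (k+1)
noncomputable def Bfc (n k : ℕ) : ℚ := Bh n k - Bh n (k+1)

lemma pascal (m t : ℕ) : ch (m+1) (t+1) = ch m t + ch m (t+1) := by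
  simp only [ch, Nat.choose_succ_succ]; push_cast; ring

lemma ch_zero {m t : ℕ} (h : m < t) : ch m t = 0 := by
  simp [ch, Nat.choose_eq_zero_of_lt h]

lemma ch_self (m : ℕ) : ch m m = 1 := by simp [ch]

lemma ch_symm (M i : ℕ) (h : i ≤ 2*M) : ch (2*M) i = ch (2*M) (2*M - i) := by
  rw [ch, ch, Nat.choose_symm h]

lemma tele (g : ℕ → ℚ) (l n : ℕ) (hl : l ≤ n) :
    ∑ j ∈ Icc l n, (g j - g (j+1)) = g l - g (n+1) := by
  induction n with
  | zero => interval_cases l; simp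
  | succ m ih =>
    rcases Nat.lt_or_ge l (m+1) with h | h
    · rw [Finset.sum_Icc_succ_top (by omega), ih (by omega)]; ring
    · have : l = m + 1 := by omega
      subst this; simp

lemma mem_R {n : ℕ} {u : List ℕ} : u ∈ R n ↔ u.length = n ∧ RC u := by
  induction n generalizing u with
  | zero => simp [R]; rintro rfl; trivial
  | succ m ih =>
    simp only [R, Finset.mem_biUnion, Finset.mem_image, Finset.mem_range]
    constructor
    · rintro ⟨w, hw, x, hx, rfl⟩
      obtain ⟨hlen, hrc⟩ := ih.1 hw
      exact ⟨by simp [hlen], by omega, by omega, hrc⟩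
    · rintro ⟨hlen, hrc⟩
      match u, hlen with
      | y :: v, hlen =>
        obtain ⟨hy1, hy2, hrcv⟩ := hrc
        exact ⟨v, ih.2 ⟨by simpa using hlen, hrcv⟩, y - 1, by omega, by simp [Nat.sub_add_cancel hy1]⟩

lemma sum_R_succ (n : ℕ) (f : List ℕ → ℚ) :
    ∑ u ∈ R (n+1), f u
      = ∑ w ∈ R n, ∑ x ∈ Finset.range (w.headD 0 + 1), f ((x+1) :: w) := by
  rw [show R (n+1) = (R n).biUnion
    (fun w => (Finset.range (w.headD 0 + 1)).image (fun x => (x+1) :: w)) from rfl]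
  rw [Finset.sum_biUnion]
  · refine Finset.sum_congr rfl fun w _ => ?_
    rw [Finset.sum_image]
    intro a _ b _ h
    simpa using h
  · intro a _ b _ hab
    simp only [Function.onFun, Finset.disjoint_left, Finset.mem_image, Finset.mem_range]
    rintro u ⟨x, _, rfl⟩ ⟨y, _, h⟩
    simp only [List.cons.injEq] at h
    exact hab h.2.symm

lemma swap_lemma (n : ℕ) (c f : ℕ → ℚ) :
    ∑ j ∈ Icc 1 n, c j * (∑ x ∈ Finset.range (j+1), f (x+1))
      = ∑ k ∈ Icc 1 (n+1), (∑ j ∈ Icc (max (k-1) 1) n, c j) * f k := by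
  have step1 : ∀ j ∈ Icc 1 n, c j * (∑ x ∈ Finset.range (j+1), f (x+1))
      = ∑ k ∈ Icc 1 (n+1), (if k ≤ j + 1 then c j * f k else 0) := by
    intro j hj
    simp only [Finset.mem_Icc] at hj
    rw [← Finset.sum_filter]
    have he : (Icc 1 (n+1)).filter (fun k => k ≤ j+1) = Icc 1 (j+1) := by
      ext k; simp only [Finset.mem_filter, Finset.mem_Icc]; omega
    rw [he, show Icc 1 (j+1) = Ico 1 (j+2) from by rw [← Finset.Ico_add_one_right_eq_Icc]; rfl,
      Finset.sum_Ico_eq_sum_range, Finset.mul_sum]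
    simp only [show j + 2 - 1 = j + 1 from rfl]
    exact Finset.sum_congr rfl fun x _ => by rw [add_comm 1 x]
  rw [Finset.sum_congr rfl step1, Finset.sum_comm]
  refine Finset.sum_congr rfl fun k _ => ?_
  rw [← Finset.sum_filter]
  have he : (Icc 1 n).filter (fun j => k ≤ j + 1) = Icc (max (k-1) 1) n := by
    ext j; simp only [Finset.mem_filter, Finset.mem_Icc]; omega
  rw [he, ← Finset.sum_mul]

lemma last_of_reverse (v : List ℕ) (h : v ≠ []) :
    v.reverse.getD (v.length - 1) 0 = v.headD 0 := by
  match v with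
  | a :: t =>
    simp only [List.reverse_cons, List.headD_cons, List.length_cons, Nat.add_sub_cancel]
    rw [List.getD_append_right _ _ _ _ (by simp)]
    simp

lemma cat_append_s16 (l : List ℕ) (y : ℕ) (hl : l ≠ []) :
    IsCatalanWord (l ++ [y]) ↔
      IsCatalanWord l ∧ 1 ≤ y ∧ y ≤ l.getD (l.length - 1) 0 + 1 := by
  have hm : 0 < l.length := List.length_pos_iff.2 hl
  set m := l.length with hmdef
  have hlen : (l ++ [y]).length = m + 1 := by simp [hmdef]
  have fA : ∀ i, i < m → (l ++ [y]).getD i 0 = l.getD i 0 := fun i hi =>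
    List.getD_append _ _ _ _ hi
  have fB : (l ++ [y]).getD m 0 = y := by
    rw [List.getD_append_right _ _ _ _ (le_refl _)]; simp
  constructor
  · rintro ⟨pos, first, steps⟩
    refine ⟨⟨fun z hz => pos z (by simp [hz]), fun _ => ?_, fun i hi => ?_⟩, ?_, ?_⟩
    · rw [← fA 0 hm]; exact first (by omega)
    · rw [← fA i (by omega), ← fA (i+1) (by omega)]; exact steps i (by omega)
    · have := pos y (by simp); omega
    · have := steps (m - 1) (by omega)
      rw [show m - 1 + 1 = m from by omega, fB, fA (m-1) (by omega)] at this
      exact this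
  · rintro ⟨⟨pos, first, steps⟩, hy1, hy2⟩
    refine ⟨fun z hz => ?_, fun _ => ?_, fun i hi => ?_⟩
    · rcases List.mem_append.1 hz with h | h
      · exact pos z h
      · simp at h; omega
    · rw [fA 0 hm]; exact first hm
    · rw [hlen] at hi
      rcases Nat.lt_or_ge (i+1) m with h | h
      · rw [fA i (by omega), fA (i+1) h]; exact steps i h
      · have : i + 1 = m := by omega
        rw [this, fB, fA i (by omega), show i = m - 1 from by omega]
        exact hy2

lemma RC_iff (u : List ℕ) : IsCatalanWord u.reverse ↔ RC u := by
  induction u with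
  | nil => simp [IsCatalanWord, RC]
  | cons y v ih =>
    rw [List.reverse_cons]
    match v with
    | [] =>
      simp only [List.reverse_nil, List.nil_append, RC]
      constructor
      · rintro ⟨pos, first, _⟩
        have := first (by simp)
        simp at this
        subst this
        exact ⟨le_refl 1, by simp, trivial⟩
      · rintro ⟨h1, h2, _⟩
        simp only [List.headD_nil] at h2
        have : y = 1 := by omega
        subst this
        exact ⟨by simp, by simp, by simp⟩
    | a :: t =>
      rw [cat_append_s16 _ _ (by simp), ih,
        show (a :: t).reverse.length = (a :: t).length from by simp,
        last_of_reverse _ (by simp)]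
      show _ ↔ (1 ≤ y ∧ y ≤ (a :: t).headD 0 + 1 ∧ RC (a :: t))
      tauto

lemma per_eq (u : List ℕ) (hu : RC u) (hne : u ≠ []) :
    bargraphPerimeter u.reverse = 2 * sp u := by
  induction u with
  | nil => simp at hne
  | cons y v ih =>
    obtain ⟨hy1, hy2, hrc⟩ := hu
    match v with
    | [] =>
      simp only [List.headD_nil] at hy2
      have : y = 1 := by omega
      subst this
      simp [bargraphPerimeter, sp]
    | a :: t =>
      set l := (a :: t).reverse with hldef
      have hm : 0 < l.length := by simp [hldef]
      set m := l.length with hmdef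
      have hml : m = (a :: t).length := by simp [hldef, hmdef]
      have fA : ∀ i, i < m → (l ++ [y]).getD i 0 = l.getD i 0 := fun i hi =>
        List.getD_append _ _ _ _ hi
      have fB : (l ++ [y]).getD m 0 = y := by
        rw [List.getD_append_right _ _ _ _ (le_refl _)]; simp
      have hh : l.getD (m - 1) 0 = (a :: t).headD 0 := by
        rw [hldef, hml]; exact last_of_reverse _ (by simp)
      have hper : bargraphPerimeter ((y :: a :: t).reverse)
          = 2 * (m+1) + l.getD 0 0 + y +
            ((∑ i ∈ Finset.range (m - 1), Nat.dist (l.getD i 0) (l.getD (i+1) 0))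
              + Nat.dist (l.getD (m-1) 0) y) := by
        rw [List.reverse_cons, ← hldef]
        unfold bargraphPerimeter
        rw [show (l ++ [y]).length = m + 1 from by simp [hmdef]]
        rw [show m + 1 - 1 = m from by omega, fB, fA 0 hm]
        congr 1
        rw [show m = (m - 1) + 1 from by omega, Finset.sum_range_succ]
        congr 1
        · exact Finset.sum_congr rfl fun i hi => by
            rw [Finset.mem_range] at hi
            rw [fA i (by omega), fA (i+1) (by omega)]
        · rw [fA (m-1) (by omega), show m - 1 + 1 = m from by omega, fB]
      have hperl : bargraphPerimeter l
          = 2 * m + l.getD 0 0 + l.getD (m-1) 0 +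
            ∑ i ∈ Finset.range (m - 1), Nat.dist (l.getD i 0) (l.getD (i+1) 0) := rfl
      have ihl : bargraphPerimeter l = 2 * sp (a :: t) := ih hrc (by simp)
      rw [hper, hh]
      show _ = 2 * sp (y :: a :: t)
      rw [sp]
      rcases eq_or_ne y ((a :: t).headD 0 + 1) with hcase | hcase
      · rw [if_pos hcase]
        have hdist : Nat.dist ((a :: t).headD 0) y = 1 := by
          rw [hcase, Nat.dist_eq_sub_of_le (by omega)]; omega
        rw [hdist]
        have := hperl
        rw [hh] at this
        omega
      · have hyle : y ≤ (a :: t).headD 0 := by omega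
        rw [if_neg hcase]
        have hdist : Nat.dist ((a :: t).headD 0) y = (a :: t).headD 0 - y := by
          rw [Nat.dist_eq_sub_of_le_right hyle]
        rw [hdist]
        have := hperl
        rw [hh] at this
        omega

lemma L1 (n k : ℕ) (hn : 1 ≤ n) (hk : 1 ≤ k) (hkn : k ≤ n+1) :
    Afc (n+1) k = Ah n (max (k-1) 1) := by
  rcases eq_or_lt_of_le hkn with rfl | hlt
  · rw [show max (n+1-1) 1 = n from by omega]
    simp only [Afc, Ah]
    rw [if_pos (le_refl (n+1)), if_neg (by omega), if_pos (le_refl n)]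
    rw [show 2*(n+1) - (n+1) - 1 = n from by omega, show n+1-1 = n from rfl,
        show 2*n - n - 1 = n - 1 from by omega]
    rw [ch_self, ch_zero (by omega : n < n+1+1), ch_self, ch_zero (by omega : n-1 < n+1)]
    norm_num
  · have hkn' : k ≤ n := by omega
    rcases eq_or_lt_of_le hk with rfl | hk2
    · rw [show max (1-1) 1 = 1 from rfl]
      rcases eq_or_lt_of_le hn with rfl | hn2
      · simp only [Afc, Ah]
        norm_num [ch, Nat.choose]
      · obtain ⟨M, hM⟩ : ∃ M, n = M + 2 := ⟨n - 2, by omega⟩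
        subst hM
        simp only [Afc, Ah]
        rw [if_pos (by omega), if_pos (by omega), if_pos (by omega)]
        rw [show 2*(M+2+1) - 1 - 1 = (2*M+2)+1+1 from by omega,
            show 2*(M+2+1) - 2 - 1 = (2*M+2)+1 from by omega,
            show 2*(M+2) - 1 - 1 = 2*M+2 from by omega,
            show M+2+1-1 = (M+1)+1 from by omega,
            show M+2-1 = M+1 from by omega,
            show M+2+1+1 = ((M+2)+1)+1 from by omega,
            show M+2+1 = (M+2)+1 from rfl]
        rw [pascal (2*M+2+1) (M+1), pascal (2*M+2+1) ((M+2)+1),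
            pascal (2*M+2) M, pascal (2*M+2) (M+1), pascal (2*M+2) (M+2), pascal (2*M+2) (M+3)]
        have hs : ch (2*(M+1)) M = ch (2*(M+1)) (M+2) := by
          rw [ch_symm _ _ (by omega), show 2*(M+1) - M = M+2 from by omega]
        rw [show 2*M+2 = 2*(M+1) from by omega] at *
        rw [hs]
        ring
    · rw [show max (k-1) 1 = k - 1 from by omega]
      obtain ⟨K, hK⟩ : ∃ K, k = K + 2 := ⟨k - 2, by omega⟩
      obtain ⟨N, hN⟩ : ∃ N, n = N + 1 := ⟨n - 1, by omega⟩
      subst hK hN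
      simp only [Afc, Ah]
      rw [if_pos (by omega), if_pos (by omega), if_pos (by omega)]
      obtain ⟨m, hm⟩ : ∃ m, 2*(N+1) - (K+2) = m := ⟨_, rfl⟩
      rw [show 2*(N+1+1) - (K+2) - 1 = m+1 from by omega,
          show 2*(N+1+1) - (K+2+1) - 1 = m from by omega,
          show 2*(N+1) - (K+2-1) - 1 = m from by omega,
          show N+1+1-1 = N+1 from rfl,
          show N+1-1 = N from rfl,
          show N+1+1+1 = ((N+1)+1)+1 from rfl,
          show N+1+1 = (N+1)+1 from rfl]
      rw [show N+1+1+1 = (N+2)+1 from rfl, show N+1+1 = (N+1)+1 from rfl,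
          pascal m N, pascal m (N+2)]
      ring

lemma L2 (n k : ℕ) (hn : 1 ≤ n) (hk : 1 ≤ k) (hkn : k ≤ n+1) :
    Bfc (n+1) k = Bh n (max (k-1) 1) + Ah n (max (k-1) 1)
      + (if 2 ≤ k then Afc n (k-1) else 0) := by
  rcases eq_or_lt_of_le hkn with rfl | hlt
  · rw [show max (n+1-1) 1 = n from by omega, if_pos (by omega : 2 ≤ n+1),
        show n+1-1 = n from rfl]
    simp only [Bfc, Bh, Afc, Ah]
    rw [if_neg (by omega : ¬ (n+1 ≤ n))]
    rw [show 2*(n+1) - (n+1) - 1 = n from by omega,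
        show 2*n - n - 1 = n - 1 from by omega,
        show n+1-1 = n from rfl]
    rw [ch_self, ch_zero (by omega : n < n+1), ch_zero (by omega : n < n+1+1), ch_self,
        ch_zero (by omega : n-1 < n), ch_zero (by omega : n-1 < n+1)]
    simp only [le_refl, if_true, if_neg (by omega : ¬ (n+1+1 ≤ n+1))]
    push_cast
    ring
  · have hkn' : k ≤ n := by omega
    rcases eq_or_lt_of_le hk with rfl | hk2
    · rw [show max (1-1) 1 = 1 from rfl, if_neg (by omega : ¬ (2 ≤ 1)), add_zero]
      rcases eq_or_lt_of_le hn with rfl | hn2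
      · simp only [Bfc, Bh, Ah]
        norm_num [ch, Nat.choose]
      · obtain ⟨M, hM⟩ : ∃ M, n = M + 2 := ⟨n - 2, by omega⟩
        subst hM
        simp only [Bfc, Bh, Ah]
        rw [if_pos (show 1 ≤ M+2+1 by omega), if_pos (show 1+1 ≤ M+2+1 by omega),
            if_pos (show 1 ≤ M+2 by omega)]
        rw [if_pos (show 1 ≤ M+2 by omega)]
        rw [show 2*(M+2+1) - 1 - 1 = (2*M+2)+1+1 from by omega,
            show 2*(M+2+1) - (1+1) - 1 = (2*M+2)+1 from by omega,
            show 2*(M+2) - 1 - 1 = 2*M+2 from by omega,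
            show M+2+1-1 = (M+1)+1 from by omega,
            show M+2-1 = M+1 from by omega,
            show M+2+1+1 = ((M+2)+1)+1 from by omega,
            show M+2+1 = (M+2)+1 from rfl]
        rw [pascal (2*M+2+1) (M+1), pascal (2*M+2+1) ((M+2)+1), pascal (2*M+2+1) (M+2),
            pascal (2*M+2) M, pascal (2*M+2) (M+1), pascal (2*M+2) (M+2), pascal (2*M+2) (M+3)]
        have hs : ch (2*(M+1)) M = ch (2*(M+1)) (M+2) := by
          rw [ch_symm _ _ (by omega), show 2*(M+1) - M = M+2 from by omega]
        rw [show 2*M+2 = 2*(M+1) from by omega] at *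
        rw [hs]
        push_cast
        ring
    · rw [show max (k-1) 1 = k - 1 from by omega, if_pos (by omega : 2 ≤ k)]
      obtain ⟨K, hK⟩ : ∃ K, k = K + 2 := ⟨k - 2, by omega⟩
      obtain ⟨P, hN⟩ : ∃ P, n = P + 2 := ⟨n - 2, by omega⟩
      subst hK hN
      rw [show K+2-1 = K+1 from rfl]
      simp only [Bfc, Bh, Afc, Ah]
      rw [if_pos (show K+2 ≤ P+2+1 by omega), if_pos (show K+2+1 ≤ P+2+1 by omega),
          if_pos (show K+1 ≤ P+2 by omega), if_pos (show K+1+1 ≤ P+2 by omega)]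
      rw [if_pos (show K+1 ≤ P+2 by omega)]
      obtain ⟨M, hm⟩ : ∃ M, 2*(P+2) - (K+1+1) - 1 = M := ⟨_, rfl⟩
      rw [show 2*(P+2+1) - (K+2) - 1 = M+1+1 from by omega,
          show 2*(P+2+1) - (K+2+1) - 1 = M+1 from by omega,
          show 2*(P+2) - (K+1) - 1 = M+1 from by omega,
          hm,
          show P+2+1-1 = P+1+1 from by omega,
          show P+2-1 = P+1 from by omega,
          show P+2+1+1 = (P+1+1)+1+1 from by omega,
          show P+2+1 = (P+1+1)+1 from rfl,
          show P+2 = (P+1)+1 from rfl]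
      rw [pascal (M+1) (P+1), pascal (M+1) (P+1+1), pascal (M+1) (P+1+1+1),
          pascal M P, pascal M (P+1), pascal M (P+2), pascal M (P+3)]
      push_cast
      ring

lemma L2' (n k : ℕ) (hn : 1 ≤ n) (hk : 1 ≤ k) (hkn : k ≤ n+1) :
    Bfc (n+1) k = (Bh n (max (k-1) 1) + Ah n (max (k-1) 1))
      + (if 2 ≤ k then Afc n (k-1) else 0) := by
  rw [L2 n k hn hk hkn]

lemma L3 (n : ℕ) (hn : 1 ≤ n) :
    Bh n 1 = (1/2) * (ch (2*n+2) (n+1) - ch (2*n) n) := by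
  match n, hn with
  | 1, _ => norm_num [Bh, ch, Nat.choose]
  | 2, _ => norm_num [Bh, ch, Nat.choose]
  | (P+3), _ =>
    simp only [Bh]
    rw [if_pos (show 1 ≤ P+3 by omega)]
    rw [show 2*(P+3) - 1 - 1 = (2*P+4) from by omega,
        show P+3-1 = P+2 from by omega,
        show 2*(P+3)+2 = (2*P+4)+1+1+1+1 from by omega,
        show 2*(P+3) = (2*P+4)+1+1 from by omega,
        show P+3 = P+2+1 from rfl]
    rw [show (P+2+1)+1 = (P+3)+1 from rfl,
        pascal ((2*P+4)+1+1+1) (P+3), pascal ((2*P+4)+1+1) (P+2), pascal ((2*P+4)+1+1) (P+3),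
        show P+3+1 = (P+3)+1 from rfl]
    rw [show P+3 = P+2+1 from rfl,
        pascal ((2*P+4)+1) (P+1), pascal ((2*P+4)+1) (P+2), pascal ((2*P+4)+1) (P+3),
        pascal (2*P+4) P, pascal (2*P+4) (P+1), pascal (2*P+4) (P+2), pascal (2*P+4) (P+3)]
    have hs1 : ch (2*(P+2)) (P+1) = ch (2*(P+2)) (P+3) := by
      rw [ch_symm _ _ (by omega), show 2*(P+2) - (P+1) = P+3 from by omega]
    have hs2 : ch (2*(P+2)) P = ch (2*(P+2)) (P+4) := by
      rw [ch_symm _ _ (by omega), show 2*(P+2) - P = P+4 from by omega]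
    rw [show 2*P+4 = 2*(P+2) from by omega] at *
    rw [hs1, hs2]
    push_cast
    ring

lemma Ah_top (n : ℕ) : Ah n (n+1) = 0 := by rw [Ah, if_neg (by omega)]
lemma Bh_top (n : ℕ) : Bh n (n+1) = 0 := by rw [Bh, if_neg (by omega)]

lemma reindex_lemma (n : ℕ) (c f : ℕ → ℚ) :
    ∑ j ∈ Icc 1 n, c j * f (j+1)
      = ∑ k ∈ Icc 1 (n+1), (if 2 ≤ k then c (k-1) else 0) * f k := by
  rw [show Icc 1 (n+1) = insert 1 (Icc 2 (n+1)) from by ext x; simp [Finset.mem_Icc]; omega,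
      Finset.sum_insert (by simp)]
  rw [if_neg (by omega : ¬ (2 ≤ 1)), zero_mul, zero_add]
  rw [show Icc 2 (n+1) = Ico 2 (n+2) from by rw [← Finset.Ico_add_one_right_eq_Icc]; rfl,
      show Icc 1 n = Ico 1 (n+1) from by rw [Finset.Ico_add_one_right_eq_Icc],
      Finset.sum_Ico_eq_sum_range, Finset.sum_Ico_eq_sum_range]
  refine Finset.sum_congr (by norm_num) fun i _ => ?_
  rw [if_pos (by omega : 2 ≤ 2 + i), show 2 + i - 1 = 1 + i from by omega,
      show 2 + i = (1 + i) + 1 from by omega]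

lemma dist_sum (n : ℕ) (hn : 1 ≤ n) : ∀ f : ℕ → ℚ,
    (∑ u ∈ R n, f (u.headD 0) = ∑ k ∈ Icc 1 n, Afc n k * f k) ∧
    (∑ u ∈ R n, (sp u : ℚ) * f (u.headD 0) = ∑ k ∈ Icc 1 n, Bfc n k * f k) := by
  induction n, hn using Nat.le_induction with
  | base =>
    intro f
    have hR1 : R 1 = {[1]} := rfl
    constructor
    · rw [hR1]
      simp only [Finset.sum_singleton, List.headD_cons, show Icc 1 1 = {1} from rfl,
        Finset.sum_singleton]
      have : Afc 1 1 = 1 := by norm_num [Afc, Ah, ch, Nat.choose]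
      rw [this, one_mul]
    · rw [hR1]
      simp only [Finset.sum_singleton, List.headD_cons, show Icc 1 1 = {1} from rfl,
        Finset.sum_singleton]
      have h2 : Bfc 1 1 = 2 := by norm_num [Bfc, Bh, Ah, ch, Nat.choose]
      have hsp : sp [1] = 2 := rfl
      rw [h2, hsp]
      norm_num
  | succ n hn ih =>
    intro f
    constructor
    · rw [sum_R_succ n (fun u => f (u.headD 0))]
      simp only [List.headD_cons]
      rw [(ih (fun h => ∑ x ∈ Finset.range (h+1), f (x+1))).1]
      rw [swap_lemma n (Afc n) f]
      refine Finset.sum_congr rfl fun k hk => ?_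
      rw [Finset.mem_Icc] at hk
      have ht : ∑ j ∈ Icc (max (k-1) 1) n, Afc n j = Ah n (max (k-1) 1) := by
        rw [show (∑ j ∈ Icc (max (k-1) 1) n, Afc n j)
            = ∑ j ∈ Icc (max (k-1) 1) n, (Ah n j - Ah n (j+1)) from rfl,
          tele (Ah n) _ n (by omega), Ah_top, sub_zero]
      rw [ht, ← L1 n k hn (by omega) (by omega)]
    · rw [sum_R_succ n (fun u => (sp u : ℚ) * f (u.headD 0))]
      simp only [List.headD_cons]
      have hsp : ∀ (w : List ℕ) (x : ℕ),
          ((sp ((x+1) :: w) : ℚ)) = (sp w : ℚ) + 1 + (if x = w.headD 0 then 1 else 0) := by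
        intro w x
        have h : sp ((x+1) :: w) = sp w + 1 + (if x = w.headD 0 then 1 else 0) := by
          rw [show sp ((x+1) :: w) = sp w + 1 + (if x+1 = w.headD 0 + 1 then 1 else 0) from rfl]
          congr 1
          simp
        rw [h]
        push_cast [apply_ite (fun t : ℕ => (t : ℚ))]
        norm_num
      have step : ∀ w : List ℕ,
          ∑ x ∈ Finset.range (w.headD 0 + 1), (sp ((x+1) :: w) : ℚ) * f (x+1)
            = ((sp w : ℚ) + 1) * (∑ x ∈ Finset.range (w.headD 0 + 1), f (x+1))
              + f (w.headD 0 + 1) := by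
        intro w
        rw [Finset.mul_sum]
        rw [show (f (w.headD 0 + 1))
            = ∑ x ∈ Finset.range (w.headD 0 + 1), (if x = w.headD 0 then f (x+1) else 0) from by
          rw [Finset.sum_ite_eq' (Finset.range (w.headD 0 + 1)) (w.headD 0) (fun x => f (x+1))]
          simp]
        rw [← Finset.sum_add_distrib]
        refine Finset.sum_congr rfl fun x _ => ?_
        rw [hsp w x]
        split_ifs with h <;> ring
      rw [Finset.sum_congr rfl (fun w _ => step w)]
      rw [Finset.sum_add_distrib]
      have e1 : ∑ w ∈ R n, ((sp w : ℚ)+1) * (∑ x ∈ Finset.range (w.headD 0 + 1), f (x+1))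
          = ∑ w ∈ R n, (sp w : ℚ) * (∑ x ∈ Finset.range (w.headD 0 + 1), f (x+1))
            + ∑ w ∈ R n, (∑ x ∈ Finset.range (w.headD 0 + 1), f (x+1)) := by
        rw [← Finset.sum_add_distrib]
        exact Finset.sum_congr rfl fun w _ => by ring
      rw [e1, (ih (fun h => ∑ x ∈ Finset.range (h+1), f (x+1))).2,
          (ih (fun h => ∑ x ∈ Finset.range (h+1), f (x+1))).1,
          (ih (fun h => f (h+1))).1]
      have e2 : ∑ k ∈ Icc 1 n, Bfc n k * (∑ x ∈ Finset.range (k+1), f (x+1))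
            + ∑ k ∈ Icc 1 n, Afc n k * (∑ x ∈ Finset.range (k+1), f (x+1))
          = ∑ j ∈ Icc 1 n, (Bfc n j + Afc n j) * (∑ x ∈ Finset.range (j+1), f (x+1)) := by
        rw [← Finset.sum_add_distrib]
        exact Finset.sum_congr rfl fun j _ => by ring
      rw [add_assoc, ← add_assoc (∑ k ∈ Icc 1 n, Bfc n k * _), e2]
      rw [swap_lemma n (fun j => Bfc n j + Afc n j) f, reindex_lemma n (Afc n) f,
          ← Finset.sum_add_distrib]
      refine Finset.sum_congr rfl fun k hk => ?_
      rw [Finset.mem_Icc] at hk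
      have ht : ∑ j ∈ Icc (max (k-1) 1) n, (Bfc n j + Afc n j)
          = Bh n (max (k-1) 1) + Ah n (max (k-1) 1) := by
        rw [show (∑ j ∈ Icc (max (k-1) 1) n, (Bfc n j + Afc n j))
            = ∑ j ∈ Icc (max (k-1) 1) n,
              ((fun j => Bh n j + Ah n j) j - (fun j => Bh n j + Ah n j) (j+1)) from
          Finset.sum_congr rfl fun j _ => by simp only [Bfc, Afc]; ring]
        rw [tele (fun j => Bh n j + Ah n j) _ n (by omega)]
        simp only [Bh_top, Ah_top, add_zero, sub_zero]
      rw [ht, ← add_mul, ← L2' n k hn (by omega) (by omega)]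

theorem total_semiperimeter (n : ℕ) (hn : 1 ≤ n) :
    ((∑ᶠ w ∈ {w : List ℕ | IsCatalanWord w ∧ w.length = n},
        bargraphPerimeter w / 2 : ℕ) : ℚ) =
      (1 / 2) * (((2 * n + 2).choose (n + 1) : ℚ) - ((2 * n).choose n : ℚ)) := by
  have hset : {w : List ℕ | IsCatalanWord w ∧ w.length = n}
      = ↑((R n).image List.reverse) := by
    ext w
    simp only [Set.mem_setOf_eq, Finset.coe_image, Set.mem_image, Finset.mem_coe, mem_R]
    constructor
    · rintro ⟨hc, hl⟩
      exact ⟨w.reverse, ⟨by simp [hl],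
        (RC_iff w.reverse).1 (by rwa [List.reverse_reverse])⟩, by simp⟩
    · rintro ⟨u, ⟨hlen, hrc⟩, rfl⟩
      exact ⟨(RC_iff u).2 hrc, by simp [hlen]⟩
  rw [hset, finsum_mem_coe_finset]
  rw [Finset.sum_image (fun a _ b _ h => List.reverse_injective h)]
  have hper : ∀ u ∈ R n, (bargraphPerimeter u.reverse / 2 : ℕ) = sp u := by
    intro u hu
    obtain ⟨hlen, hrc⟩ := mem_R.1 hu
    rw [per_eq u hrc (by intro h; subst h; simp at hlen; omega)]
    omega
  rw [Finset.sum_congr rfl hper]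
  push_cast
  have hd := (dist_sum n hn (fun _ => (1:ℚ))).2
  simp only [mul_one] at hd
  rw [hd]
  have htel : ∑ k ∈ Icc 1 n, Bfc n k = Bh n 1 := by
    simp only [Bfc]
    rw [tele (Bh n) 1 n hn, Bh_top, sub_zero]
  rw [htel, L3 n hn]
  simp only [ch]
end
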